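/- arXiv:2305.00503 — 5 statements merged into one kernel-verified Lean document; each statement's English description precedes it below -/
import Mathlib

section
/- If Q and Q' are cliques of a connected graph G and v ∈ Q, v' ∈ Q' are vertices joined by a path of length ℓ in G, then Q and Q' are joined by a path of length at most ℓ + 1 in the clique graph kG. -/
open SimpleGraph

/-- A maximal clique: a clique not properly contained in any other clique. -/
def IsMaxClique {V : Type*} (G : SimpleGraph V) (s : Set V) : Prop :=
  G.IsClique s ∧ ∀ t : Set V, G.IsClique t → s ⊆ t → t = s

/-- Vertices of the clique graph: the (maximal) cliques of `G`. -/
abbrev CliqueVert {V : Type*} (G : SimpleGraph V) := {s : Set V // IsMaxClique G s}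

/-- The clique graph `kG`: cliques of `G`, two distinct cliques adjacent iff they intersect. -/
def cliqueGraph {V : Type*} (G : SimpleGraph V) : SimpleGraph (CliqueVert G) where
  Adj Q R := Q ≠ R ∧ (Q.1 ∩ R.1).Nonempty
  symm := by
    constructor
    rintro Q R ⟨hne, x, hx1, hx2⟩
    exact ⟨hne.symm, x, hx2, hx1⟩
  loopless := by constructor; rintro Q ⟨hne, -⟩; exact hne rfl

/-- Every clique extends to a maximal clique. -/
lemma exists_maxClique_supset {V : Type*} (G : SimpleGraph V) {s : Set V}
    (hs : G.IsClique s) : ∃ t : Set V, IsMaxClique G t ∧ s ⊆ t := by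
  obtain ⟨t, hst, ht, hmax⟩ := zorn_subset_nonempty {t : Set V | G.IsClique t}
    (fun c hc hchain _ => ⟨⋃₀ c, by
      intro x hx y hy hxy
      obtain ⟨t1, ht1, hx1⟩ := hx
      obtain ⟨t2, ht2, hy2⟩ := hy
      rcases hchain.total ht1 ht2 with h | h
      · exact hc ht2 (h hx1) hy2 hxy
      · exact hc ht1 hx1 (h hy2) hxy,
      fun t ht => Set.subset_sUnion_of_mem ht⟩) s hs
  exact ⟨t, ⟨ht, fun u hu htu => (hmax hu htu).antisymm htu⟩, hst⟩

/-- Step from a clique to a clique containing a given vertex: length ≤ 1. -/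
lemma cliqueGraph_step {V : Type*} (G : SimpleGraph V) (Q R : CliqueVert G)
    {x : V} (hxQ : x ∈ Q.1) (hxR : x ∈ R.1) {Q'' : CliqueVert G}
    (W : (cliqueGraph G).Walk R Q'') :
    ∃ W' : (cliqueGraph G).Walk Q Q'', W'.length ≤ W.length + 1 := by
  by_cases h : Q = R
  · subst h; exact ⟨W, Nat.le_succ _⟩
  · exact ⟨Walk.cons ⟨h, x, hxQ, hxR⟩ W, le_refl _⟩

/-- If `Q` and `Q'` are cliques of a connected graph `G` and `v ∈ Q`, `v' ∈ Q'` are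
joined by a path of length `ℓ` in `G`, then `Q` and `Q'` are joined by a path of
length at most `ℓ + 1` in the clique graph `kG`. -/
theorem cliqueGraph_walk_of_walk {V : Type*} (G : SimpleGraph V) (hG : G.Connected)
    (Q Q' : CliqueVert G) {v v' : V} (hv : v ∈ Q.1) (hv' : v' ∈ Q'.1)
    (P : G.Walk v v') :
    ∃ W : (cliqueGraph G).Walk Q Q', W.length ≤ P.length + 1 := by
  induction P generalizing Q with
  | nil =>
    obtain ⟨W', hW'⟩ := cliqueGraph_step G Q Q' hv hv' Walk.nil
    exact ⟨W', by simpa using hW'⟩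
  | @cons a b c hab p ih =>
    have hab_clique : G.IsClique {a, b} := by
      intro x hx y hy hxy
      rcases hx with rfl | rfl <;> rcases hy with rfl | rfl
      · exact absurd rfl hxy
      · exact hab
      · exact hab.symm
      · exact absurd rfl hxy
    obtain ⟨t, ht, hsub⟩ := exists_maxClique_supset G hab_clique
    have hbt : b ∈ t := hsub (by simp)
    have hat : a ∈ t := hsub (by simp)
    obtain ⟨W, hW⟩ := ih ⟨t, ht⟩ hbt hv'
    obtain ⟨W', hW'⟩ := cliqueGraph_step G Q ⟨t, ht⟩ hv hat W
    exact ⟨W', by simp only [Walk.length_cons]; omega⟩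
end

section
/- Let p : G̃ → G be a triangular covering map and let α, β be homotopic walks in G with common start vertex v₀. Then the lifts of α and β starting at any fixed preimage ṽ of v₀ are homotopic walks in G̃; in particular, they have the same end vertex. -/
open SimpleGraph

/-- The closed neighbourhood of a vertex. -/
def closedNbhd {V : Type*} (G : SimpleGraph V) (v : V) : Set V := insert v (G.neighborSet v)

/-- A triangular covering map: a graph homomorphism between connected graphs whose
restriction to each closed neighbourhood is an isomorphism onto the closed
neighbourhood of the image vertex. -/
structure IsTriangularCover {V' V : Type*} {G' : SimpleGraph V'} {G : SimpleGraph V}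
    (p : G' →g G) : Prop where
  connDom : G'.Connected
  connCod : G.Connected
  injOn : ∀ v : V', Set.InjOn p (closedNbhd G' v)
  surjOn : ∀ v : V', Set.SurjOn p (closedNbhd G' v) (closedNbhd G (p v))
  reflectAdj : ∀ v x y : V', x ∈ closedNbhd G' v → y ∈ closedNbhd G' v →
    G.Adj (p x) (p y) → G'.Adj x y

/-- Elementary moves on walks (recorded as lists of vertices): triangle
removal/insertion and dead end removal/insertion. -/
inductive ElemMove {V : Type*} (G : SimpleGraph V) : List V → List V → Prop
  | triRemove (l₁ l₂ : List V) (a b c : V) (h₁ : G.Adj a b) (h₂ : G.Adj b c) (h₃ : G.Adj a c) :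
      ElemMove G (l₁ ++ a :: b :: c :: l₂) (l₁ ++ a :: c :: l₂)
  | triInsert (l₁ l₂ : List V) (a b c : V) (h₁ : G.Adj a b) (h₂ : G.Adj b c) (h₃ : G.Adj a c) :
      ElemMove G (l₁ ++ a :: c :: l₂) (l₁ ++ a :: b :: c :: l₂)
  | deadEndRemove (l₁ l₂ : List V) (a b : V) (h : G.Adj a b) :
      ElemMove G (l₁ ++ a :: b :: a :: l₂) (l₁ ++ a :: l₂)
  | deadEndInsert (l₁ l₂ : List V) (a b : V) (h : G.Adj a b) :
      ElemMove G (l₁ ++ a :: l₂) (l₁ ++ a :: b :: a :: l₂)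

/-- Two walks are homotopic if one can be transformed into the other by a finite
sequence of elementary moves. -/
def Homotopic {V : Type*} (G : SimpleGraph V) : List V → List V → Prop :=
  Relation.ReflTransGen (ElemMove G)

/-- A graph is triangularly simply connected if it is connected and every closed walk
is homotopic to a trivial walk. -/
def TriSimplyConnected {V : Type*} (G : SimpleGraph V) : Prop :=
  G.Connected ∧ ∀ (v : V) (l : List V), (v :: l).Chain' G.Adj →
    (v :: l).getLast (List.cons_ne_nil v l) = v → Homotopic G (v :: l) [v]

section Aux

variable {V' V : Type*} {G' : SimpleGraph V'} {G : SimpleGraph V}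

lemma mem_closedNbhd_self (v : V) : v ∈ closedNbhd G v := Set.mem_insert _ _

lemma mem_closedNbhd_of_adj {v w : V} (h : G.Adj v w) : w ∈ closedNbhd G v :=
  Set.mem_insert_of_mem _ h

lemma ElemMove.head?_eq {l l' : List V} (m : ElemMove G l l') : l.head? = l'.head? := by
  cases m with
  | triRemove l₁ l₂ a b c h₁ h₂ h₃ => cases l₁ <;> simp
  | triInsert l₁ l₂ a b c h₁ h₂ h₃ => cases l₁ <;> simp
  | deadEndRemove l₁ l₂ a b h => cases l₁ <;> simp
  | deadEndInsert l₁ l₂ a b h => cases l₁ <;> simp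

lemma ElemMove.getLast?_eq {l l' : List V} (m : ElemMove G l l') :
    l.getLast? = l'.getLast? := by
  cases m with
  | triRemove l₁ l₂ a b c h₁ h₂ h₃ =>
    rw [show l₁ ++ a :: b :: c :: l₂ = (l₁ ++ [a, b]) ++ c :: l₂ by simp,
      show l₁ ++ a :: c :: l₂ = (l₁ ++ [a]) ++ c :: l₂ by simp,
      List.getLast?_append_cons, List.getLast?_append_cons]
  | triInsert l₁ l₂ a b c h₁ h₂ h₃ =>
    rw [show l₁ ++ a :: b :: c :: l₂ = (l₁ ++ [a, b]) ++ c :: l₂ by simp,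
      show l₁ ++ a :: c :: l₂ = (l₁ ++ [a]) ++ c :: l₂ by simp,
      List.getLast?_append_cons, List.getLast?_append_cons]
  | deadEndRemove l₁ l₂ a b h =>
    rw [show l₁ ++ a :: b :: a :: l₂ = (l₁ ++ [a, b]) ++ a :: l₂ by simp,
      List.getLast?_append_cons, List.getLast?_append_cons]
  | deadEndInsert l₁ l₂ a b h =>
    rw [show l₁ ++ a :: b :: a :: l₂ = (l₁ ++ [a, b]) ++ a :: l₂ by simp,
      List.getLast?_append_cons, List.getLast?_append_cons]

lemma Homotopic.head?_eq {l l' : List V} (h : Homotopic G l l') : l.head? = l'.head? := by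
  induction h with
  | refl => rfl
  | tail _ m ih => exact ih.trans m.head?_eq

lemma Homotopic.getLast?_eq {l l' : List V} (h : Homotopic G l l') :
    l.getLast? = l'.getLast? := by
  induction h with
  | refl => rfl
  | tail _ m ih => exact ih.trans m.getLast?_eq

/-- Unique lifting: a chain in `G'` is determined by its image and its head. -/
lemma lift_unique (p : G' →g G) (hp : IsTriangularCover p) :
    ∀ (α' β' : List V'), α'.Chain' G'.Adj → β'.Chain' G'.Adj →
      α'.map p = β'.map p → α'.head? = β'.head? → α' = β' := by
  intro α'
  induction α' with
  | nil =>
    intro β' _ _ hm _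
    cases β' with
    | nil => rfl
    | cons y ys => simp at hm
  | cons x xs ih =>
    intro β' hca hcb hm hh
    cases β' with
    | nil => simp at hm
    | cons y ys =>
      simp only [List.head?_cons, Option.some.injEq] at hh
      subst hh
      simp only [List.map_cons, List.cons.injEq] at hm
      have htail : xs.head? = ys.head? := by
        cases xs with
        | nil =>
          have := hm.2.symm
          cases ys with
          | nil => rfl
          | cons w ws => simp at this
        | cons u us =>
          cases ys with
          | nil => simp at hm
          | cons w ws =>
            simp only [List.map_cons, List.cons.injEq] at hm
            have hxu : G'.Adj x u := (List.isChain_cons_cons.mp hca).1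
            have hxw : G'.Adj x w := (List.isChain_cons_cons.mp hcb).1
            have : u = w := hp.injOn x (mem_closedNbhd_of_adj hxu)
              (mem_closedNbhd_of_adj hxw) hm.2.1
            simp [this]
      have := ih ys hca.tail hcb.tail hm.2 htail
      simp [this]

/-- Lifting an elementary move. -/
lemma lift_move (p : G' →g G) (hp : IsTriangularCover p) {α β : List V}
    (m : ElemMove G α β) {α' : List V'} (hc : α'.Chain' G'.Adj) (hm : α'.map p = α) :
    ∃ β', ElemMove G' α' β' ∧ β'.Chain' G'.Adj ∧ β'.map p = β := by
  cases m with
  | triRemove l₁ l₂ a b c h₁ h₂ h₃ =>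
    rw [List.map_eq_append_iff] at hm
    obtain ⟨L₁, r₁, rfl, hL₁, hr₁⟩ := hm
    obtain ⟨a', r₂, he₂, ha, hr₂⟩ := List.map_eq_cons_iff.mp hr₁
    obtain ⟨b', r₃, he₃, hb, hr₃⟩ := List.map_eq_cons_iff.mp hr₂
    obtain ⟨c', L₂, he₄, hcc, hL₂⟩ := List.map_eq_cons_iff.mp hr₃
    subst he₂ he₃ he₄ ha hb hcc
    rw [List.Chain', List.isChain_append] at hc
    obtain ⟨hc₁, hc₂, hlink⟩ := hc
    have hab : G'.Adj a' b' := (List.isChain_cons_cons.mp hc₂).1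
    have hc₃ := (List.isChain_cons_cons.mp hc₂).2
    have hbc : G'.Adj b' c' := (List.isChain_cons_cons.mp hc₃).1
    have hac : G'.Adj a' c' := hp.reflectAdj b' a' c'
      (mem_closedNbhd_of_adj hab.symm) (mem_closedNbhd_of_adj hbc) h₃
    refine ⟨L₁ ++ a' :: c' :: L₂, ElemMove.triRemove L₁ L₂ a' b' c' hab hbc hac, ?_, by
      simp [hL₁, hL₂]⟩
    rw [List.Chain', List.isChain_append]
    exact ⟨hc₁, List.isChain_cons_cons.mpr ⟨hac, (List.isChain_cons_cons.mp hc₃).2⟩, by simpa using hlink⟩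
  | triInsert l₁ l₂ a b c h₁ h₂ h₃ =>
    rw [List.map_eq_append_iff] at hm
    obtain ⟨L₁, r₁, rfl, hL₁, hr₁⟩ := hm
    obtain ⟨a', r₂, he₂, ha, hr₂⟩ := List.map_eq_cons_iff.mp hr₁
    obtain ⟨c', L₂, he₃, hcc, hL₂⟩ := List.map_eq_cons_iff.mp hr₂
    subst he₂ he₃ ha hcc
    rw [List.Chain', List.isChain_append] at hc
    obtain ⟨hc₁, hc₂, hlink⟩ := hc
    have hac : G'.Adj a' c' := (List.isChain_cons_cons.mp hc₂).1
    obtain ⟨b', hb'mem, hpb'⟩ := hp.surjOn a' (mem_closedNbhd_of_adj h₁)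
    have hba' : b' ≠ a' := by
      intro he; rw [he] at hpb'; exact h₁.ne hpb'
    have hab : G'.Adj a' b' := by
      rcases hb'mem with he | hmem
      · exact absurd he hba'
      · exact hmem
    have hbc : G'.Adj b' c' := hp.reflectAdj a' b' c' hb'mem
      (mem_closedNbhd_of_adj hac) (by rw [hpb']; exact h₂)
    refine ⟨L₁ ++ a' :: b' :: c' :: L₂,
      ElemMove.triInsert L₁ L₂ a' b' c' hab hbc hac, ?_, by simp [hL₁, hL₂, hpb']⟩
    rw [List.Chain', List.isChain_append]
    exact ⟨hc₁, List.isChain_cons_cons.mpr ⟨hab, List.isChain_cons_cons.mpr ⟨hbc, hc₂.tail⟩⟩,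
      by simpa using hlink⟩
  | deadEndRemove l₁ l₂ a b h =>
    rw [List.map_eq_append_iff] at hm
    obtain ⟨L₁, r₁, rfl, hL₁, hr₁⟩ := hm
    obtain ⟨a₁, r₂, he₂, ha, hr₂⟩ := List.map_eq_cons_iff.mp hr₁
    obtain ⟨b', r₃, he₃, hb, hr₃⟩ := List.map_eq_cons_iff.mp hr₂
    obtain ⟨a₂, L₂, he₄, ha₂, hL₂⟩ := List.map_eq_cons_iff.mp hr₃
    subst he₂ he₃ he₄ ha hb
    rw [List.Chain', List.isChain_append] at hc
    obtain ⟨hc₁, hc₂, hlink⟩ := hc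
    have hab : G'.Adj a₁ b' := (List.isChain_cons_cons.mp hc₂).1
    have hc₃ := (List.isChain_cons_cons.mp hc₂).2
    have hba : G'.Adj b' a₂ := (List.isChain_cons_cons.mp hc₃).1
    have heq : a₂ = a₁ := hp.injOn b' (mem_closedNbhd_of_adj hba)
      (mem_closedNbhd_of_adj hab.symm) ha₂
    subst heq
    refine ⟨L₁ ++ a₂ :: L₂, ElemMove.deadEndRemove L₁ L₂ a₂ b' hab, ?_, by simp [hL₁, hL₂, ha₂]⟩
    rw [List.Chain', List.isChain_append]
    refine ⟨hc₁, ?_, by simpa using hlink⟩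
    cases L₂ with
    | nil => simp
    | cons w ws =>
      have := (List.isChain_cons_cons.mp hc₃).2
      exact List.isChain_cons_cons.mpr ⟨(List.isChain_cons_cons.mp this).1, (List.isChain_cons_cons.mp this).2⟩
  | deadEndInsert l₁ l₂ a b h =>
    rw [List.map_eq_append_iff] at hm
    obtain ⟨L₁, r₁, rfl, hL₁, hr₁⟩ := hm
    obtain ⟨a', L₂, he₂, ha, hL₂⟩ := List.map_eq_cons_iff.mp hr₁
    subst he₂ ha
    rw [List.Chain', List.isChain_append] at hc
    obtain ⟨hc₁, hc₂, hlink⟩ := hc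
    obtain ⟨b', hb'mem, hpb'⟩ := hp.surjOn a' (mem_closedNbhd_of_adj h)
    have hba' : b' ≠ a' := by
      intro he; rw [he] at hpb'; exact h.ne hpb'
    have hab : G'.Adj a' b' := by
      rcases hb'mem with he | hmem
      · exact absurd he hba'
      · exact hmem
    refine ⟨L₁ ++ a' :: b' :: a' :: L₂, ElemMove.deadEndInsert L₁ L₂ a' b' hab, ?_,
      by simp [hL₁, hL₂, hpb']⟩
    rw [List.Chain', List.isChain_append]
    exact ⟨hc₁, List.isChain_cons_cons.mpr ⟨hab, List.isChain_cons_cons.mpr ⟨hab.symm, hc₂⟩⟩,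
      by simpa using hlink⟩

end Aux

/-- Lifts of homotopic walks starting at the same preimage of the common start
vertex are homotopic; in particular they have the same end vertex. -/
theorem homotopicLifts {V' V : Type*} {G' : SimpleGraph V'} {G : SimpleGraph V}
    (p : G' →g G) (hp : IsTriangularCover p) (α β : List V)
    (hhom : Homotopic G α β)
    (α' β' : List V') (hα' : α'.Chain' G'.Adj) (hβ' : β'.Chain' G'.Adj)
    (hmapα : α'.map p = α) (hmapβ : β'.map p = β)
    (vt : V') (hheadα : α'.head? = some vt) (hheadβ : β'.head? = some vt) :
    Homotopic G' α' β' ∧ α'.getLast? = β'.getLast? := by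
  have key : ∃ γ : List V', Homotopic G' α' γ ∧ γ.Chain' G'.Adj ∧ γ.map p = β := by
    clear hmapβ hβ' hheadβ
    induction hhom with
    | refl => exact ⟨α', Relation.ReflTransGen.refl, hα', hmapα⟩
    | tail _ m ih =>
      obtain ⟨γ, hhomγ, hcγ, hmγ⟩ := ih
      obtain ⟨γ', hm', hc', hmap'⟩ := lift_move p hp m hcγ hmγ
      exact ⟨γ', hhomγ.tail hm', hc', hmap'⟩
  obtain ⟨γ, hhomγ, hcγ, hmγ⟩ := key
  have hγβ : γ = β' := by
    refine lift_unique p hp γ β' hcγ hβ' (by rw [hmγ, hmapβ]) ?_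
    rw [← hhomγ.head?_eq, hheadα, hheadβ]
  subst hγβ
  exact ⟨hhomγ, hhomγ.getLast?_eq⟩
end

section
/- Let p : G̃ → G be a universal triangular covering map (G̃ triangularly simply connected) and q : Ḡ → G any triangular covering map. For any vertices ṽ ∈ G̃ and v̄ ∈ Ḡ with p(ṽ) = q(v̄), there exists a unique triangular covering map q̃ : G̃ → Ḡ with p = q ∘ q̃ and q̃(ṽ) = v̄. -/
open SimpleGraph

section Aux

lemma mem_closedNbhd_self_s8 {W : Type*} (H : SimpleGraph W) (v : W) : v ∈ closedNbhd H v :=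
  Set.mem_insert _ _

lemma adj_mem_closedNbhd {W : Type*} {H : SimpleGraph W} {v x : W} (h : H.Adj v x) :
    x ∈ closedNbhd H v := Set.mem_insert_of_mem _ h

lemma mem_closedNbhd_iff {W : Type*} {H : SimpleGraph W} {v x : W} :
    x ∈ closedNbhd H v ↔ x = v ∨ H.Adj v x := Set.mem_insert_iff

variable {V'' V : Type*} {G'' : SimpleGraph V''} {G : SimpleGraph V}
  {q : G'' →g G}

open Classical in
noncomputable def tstep (hq : IsTriangularCover q) (x : V'') (w : V) : V'' :=
  if h : G.Adj (q x) w then (hq.surjOn x (adj_mem_closedNbhd h)).choose else x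

variable (hq : IsTriangularCover q)

lemma tstep_mem {x : V''} {w : V} (h : G.Adj (q x) w) :
    tstep hq x w ∈ closedNbhd G'' x ∧ q (tstep hq x w) = w := by
  rw [tstep, dif_pos h]
  · exact (hq.surjOn x (adj_mem_closedNbhd h)).choose_spec

lemma tstep_q {x : V''} {w : V} (h : G.Adj (q x) w) : q (tstep hq x w) = w :=
  (tstep_mem hq h).2

lemma tstep_adj {x : V''} {w : V} (h : G.Adj (q x) w) : G''.Adj x (tstep hq x w) := by
  rcases mem_closedNbhd_iff.mp (tstep_mem hq h).1 with he | ha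
  · exact absurd (he ▸ tstep_q hq h) h.ne
  · exact ha

lemma tstep_eq {x : V''} {w : V} (h : G.Adj (q x) w) {y : V''}
    (hy : y ∈ closedNbhd G'' x) (hqy : q y = w) : y = tstep hq x w :=
  hq.injOn x hy (tstep_mem hq h).1 (by rw [hqy, tstep_q hq h])

lemma tstep_triangle {x : V''} {b c : V} (h₁ : G.Adj (q x) b) (h₂ : G.Adj b c)
    (h₃ : G.Adj (q x) c) : tstep hq (tstep hq x b) c = tstep hq x c := by
  have hb : q (tstep hq x b) = b := tstep_q hq h₁
  have hyx : G''.Adj x (tstep hq x b) := tstep_adj hq h₁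
  have h₂' : G.Adj (q (tstep hq x b)) c := hb.symm ▸ h₂
  have hz : q (tstep hq (tstep hq x b) c) = c := tstep_q hq h₂'
  have hxz : G''.Adj x (tstep hq (tstep hq x b) c) :=
    hq.reflectAdj (tstep hq x b) x _ (adj_mem_closedNbhd hyx.symm) (tstep_mem hq h₂').1
      (by rw [hz]; exact h₃)
  exact tstep_eq hq h₃ (adj_mem_closedNbhd hxz) hz

lemma tstep_back {x : V''} {b : V} (h : G.Adj (q x) b) :
    tstep hq (tstep hq x b) (q x) = x := by
  have hb : q (tstep hq x b) = b := tstep_q hq h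
  have h' : G.Adj (q (tstep hq x b)) (q x) := by rw [hb]; exact h.symm
  exact (tstep_eq hq h' (adj_mem_closedNbhd (tstep_adj hq h).symm) rfl).symm

lemma fold_q : ∀ (l : List V) (x : V''), List.Chain G.Adj (q x) l →
    q (List.foldl (tstep hq) x l) = l.getLastD (q x) := by
  intro l
  induction l with
  | nil => intro x _; rfl
  | cons w t ih =>
    intro x hc
    simp only [List.Chain, List.isChain_cons_cons] at hc
    rw [List.foldl_cons, List.getLastD_cons,
      ih (tstep hq x w) (by rw [tstep_q hq hc.1]; exact hc.2), tstep_q hq hc.1]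

lemma fold_q_concat (t : List V) (a : V) (x : V'')
    (hc : List.Chain G.Adj (q x) (t ++ [a])) :
    q (List.foldl (tstep hq) x (t ++ [a])) = a := by
  rw [fold_q hq _ _ hc, List.getLastD_eq_getLast?, List.getLast?_concat]
  rfl

lemma fold_reverse : ∀ (m : List V) (z : V''), List.Chain G.Adj (q z) m →
    List.foldl (tstep hq) (List.foldl (tstep hq) z m) ((q z :: m).reverse.tail) = z := by
  intro m
  induction m with
  | nil => intro z _; simp
  | cons w t ih =>
    intro z hc
    simp only [List.Chain, List.isChain_cons_cons] at hc
    have hy : q (tstep hq z w) = w := tstep_q hq hc.1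
    have ih' := ih (tstep hq z w) (by rw [hy]; exact hc.2)
    rw [hy] at ih'
    have hrev : (q z :: w :: t).reverse.tail = ((w :: t).reverse.tail) ++ [q z] := by
      rw [show (q z :: w :: t).reverse = (w :: t).reverse ++ [q z] by simp,
        List.tail_append_of_ne_nil (by simp)]
    rw [List.foldl_cons, hrev, List.foldl_append, ih', List.foldl_cons, List.foldl_nil,
      tstep_back hq hc.1]

end Aux

section Moves

variable {V'' V : Type*} {G'' : SimpleGraph V''} {G : SimpleGraph V}
  {q : G'' →g G} (hq : IsTriangularCover q)

lemma head?_append_cons {α : Type*} (l₁ : List α) (a : α) (M M' : List α) :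
    (l₁ ++ a :: M).head? = (l₁ ++ a :: M').head? := by
  cases l₁ <;> simp

lemma elem_fold_core (a : V) (M M' : List V)
    (hstep : ∀ z : V'', q z = a →
      List.foldl (tstep hq) z M = List.foldl (tstep hq) z M') :
    ∀ (l₁ : List V) (x : V''), (l₁ ++ [a]).Chain' G.Adj →
      (l₁ ++ [a]).head? = some (q x) →
      List.foldl (tstep hq) x (l₁ ++ a :: M).tail = List.foldl (tstep hq) x (l₁ ++ a :: M').tail := by
  intro l₁ x hc hx
  cases l₁ with
  | nil =>
    simp only [List.nil_append, List.head?_cons, Option.some_inj] at hx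
    simpa using hstep x hx.symm
  | cons d t =>
    simp only [List.cons_append, List.head?_cons, Option.some_inj] at hx
    have hchain : List.Chain G.Adj (q x) (t ++ [a]) := hx ▸ hc
    have hz : q (List.foldl (tstep hq) x (t ++ [a])) = a := fold_q_concat hq t a x hchain
    have hrw : ∀ M₀ : List V, (d :: t ++ a :: M₀).tail = (t ++ [a]) ++ M₀ := by
      intro M₀; simp
    rw [hrw M, hrw M']
    simp only [List.foldl_append] at hz ⊢
    exact hstep _ hz

lemma chain'_prefix_of_move {α : Type*} {R : α → α → Prop} (l₁ : List α) (a : α) (M : List α)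
    (hc : (l₁ ++ a :: M).Chain' R) : (l₁ ++ [a]).Chain' R :=
  hc.prefix ⟨M, by simp⟩

lemma elem_fold {L L' : List V} (hm : ElemMove G L L') (hc : L.Chain' G.Adj)
    (x : V'') (hx : L.head? = some (q x)) :
    List.foldl (tstep hq) x L.tail = List.foldl (tstep hq) x L'.tail := by
  cases hm with
  | triRemove l₁ l₂ a b c h₁ h₂ h₃ =>
    refine elem_fold_core hq a _ _ (fun z hz => ?_) l₁ x
      (chain'_prefix_of_move l₁ a _ hc) (by rw [← hx]; exact (head?_append_cons l₁ a _ _).symm)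
    subst hz
    simp only [List.foldl_cons]
    rw [tstep_triangle hq h₁ h₂ h₃]
  | triInsert l₁ l₂ a b c h₁ h₂ h₃ =>
    refine elem_fold_core hq a _ _ (fun z hz => ?_) l₁ x
      (chain'_prefix_of_move l₁ a _ hc) (by rw [← hx]; exact (head?_append_cons l₁ a _ _).symm)
    subst hz
    simp only [List.foldl_cons]
    rw [tstep_triangle hq h₁ h₂ h₃]
  | deadEndRemove l₁ l₂ a b hab =>
    refine elem_fold_core hq a _ _ (fun z hz => ?_) l₁ x
      (chain'_prefix_of_move l₁ a _ hc) (by rw [← hx]; exact (head?_append_cons l₁ a _ _).symm)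
    subst hz
    simp only [List.foldl_cons]
    rw [tstep_back hq hab]
  | deadEndInsert l₁ l₂ a b hab =>
    refine elem_fold_core hq a _ _ (fun z hz => ?_) l₁ x
      (chain'_prefix_of_move l₁ a _ hc) (by rw [← hx]; exact (head?_append_cons l₁ a _ _).symm)
    subst hz
    simp only [List.foldl_cons]
    rw [tstep_back hq hab]

lemma elem_chain {L L' : List V} (hm : ElemMove G L L') (hc : L.Chain' G.Adj) :
    L'.Chain' G.Adj := by
  cases hm with
  | triRemove l₁ l₂ a b c h₁ h₂ h₃ =>
    simp only [List.Chain'] at hc ⊢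
    rw [List.isChain_append] at hc ⊢
    refine ⟨hc.1, ?_, by simpa using hc.2.2⟩
    have := hc.2.1
    rw [List.isChain_cons_cons, List.isChain_cons_cons] at this
    rw [List.isChain_cons_cons]
    exact ⟨h₃, this.2.2⟩
  | triInsert l₁ l₂ a b c h₁ h₂ h₃ =>
    simp only [List.Chain'] at hc ⊢
    rw [List.isChain_append] at hc ⊢
    refine ⟨hc.1, ?_, by simpa using hc.2.2⟩
    have := hc.2.1
    rw [List.isChain_cons_cons] at this
    rw [List.isChain_cons_cons, List.isChain_cons_cons]
    exact ⟨h₁, h₂, this.2⟩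
  | deadEndRemove l₁ l₂ a b hab =>
    simp only [List.Chain'] at hc ⊢
    rw [List.isChain_append] at hc ⊢
    refine ⟨hc.1, ?_, by simpa using hc.2.2⟩
    have := hc.2.1
    rw [List.isChain_cons_cons, List.isChain_cons_cons] at this
    exact this.2.2
  | deadEndInsert l₁ l₂ a b hab =>
    simp only [List.Chain'] at hc ⊢
    rw [List.isChain_append] at hc ⊢
    refine ⟨hc.1, ?_, by simpa using hc.2.2⟩
    have := hc.2.1
    rw [List.isChain_cons_cons, List.isChain_cons_cons]
    exact ⟨hab, hab.symm, this⟩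

lemma elem_head {L L' : List V} (hm : ElemMove G L L') : L.head? = L'.head? := by
  cases hm with
  | triRemove l₁ l₂ a b c h₁ h₂ h₃ => exact head?_append_cons l₁ a _ _
  | triInsert l₁ l₂ a b c h₁ h₂ h₃ => exact head?_append_cons l₁ a _ _
  | deadEndRemove l₁ l₂ a b hab => exact head?_append_cons l₁ a _ _
  | deadEndInsert l₁ l₂ a b hab => exact head?_append_cons l₁ a _ _

lemma homotopic_fold {L L' : List V} (hh : Homotopic G L L') (hc : L.Chain' G.Adj) :
    L'.Chain' G.Adj ∧ L.head? = L'.head? ∧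
      ∀ x : V'', L.head? = some (q x) →
        List.foldl (tstep hq) x L.tail = List.foldl (tstep hq) x L'.tail := by
  induction hh with
  | refl => exact ⟨hc, rfl, fun _ _ => rfl⟩
  | tail _ hMN ih =>
    obtain ⟨hcM, hhead, hfold⟩ := ih
    exact ⟨elem_chain hMN hcM, hhead.trans (elem_head hMN), fun x hx => by
      rw [hfold x hx, elem_fold hq hMN hcM x (hhead ▸ hx)]⟩

lemma elem_move_map {V₁ V₂ : Type*} {H₁ : SimpleGraph V₁} {H₂ : SimpleGraph V₂}
    (f : H₁ →g H₂) {L L' : List V₁} (hm : ElemMove H₁ L L') :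
    ElemMove H₂ (L.map f) (L'.map f) := by
  cases hm with
  | triRemove l₁ l₂ a b c h₁ h₂ h₃ =>
    simpa using ElemMove.triRemove (l₁.map f) (l₂.map f) (f a) (f b) (f c)
      (f.map_adj h₁) (f.map_adj h₂) (f.map_adj h₃)
  | triInsert l₁ l₂ a b c h₁ h₂ h₃ =>
    simpa using ElemMove.triInsert (l₁.map f) (l₂.map f) (f a) (f b) (f c)
      (f.map_adj h₁) (f.map_adj h₂) (f.map_adj h₃)
  | deadEndRemove l₁ l₂ a b hab =>
    simpa using ElemMove.deadEndRemove (l₁.map f) (l₂.map f) (f a) (f b) (f.map_adj hab)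
  | deadEndInsert l₁ l₂ a b hab =>
    simpa using ElemMove.deadEndInsert (l₁.map f) (l₂.map f) (f a) (f b) (f.map_adj hab)

lemma homotopic_map {V₁ V₂ : Type*} {H₁ : SimpleGraph V₁} {H₂ : SimpleGraph V₂}
    (f : H₁ →g H₂) {L L' : List V₁} (hh : Homotopic H₁ L L') :
    Homotopic H₂ (L.map f) (L'.map f) := by
  induction hh with
  | refl => exact Relation.ReflTransGen.refl
  | tail _ hstep ih => exact ih.tail (elem_move_map f hstep)

end Moves


/-- Universal property of the universal triangular cover: it uniquely factors
through any other triangular cover, once base points are fixed. -/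
theorem universal_property {V' V'' V : Type*} {G' : SimpleGraph V'}
    {G'' : SimpleGraph V''} {G : SimpleGraph V}
    (p : G' →g G) (hp : IsTriangularCover p) (hsc : TriSimplyConnected G')
    (q : G'' →g G) (hq : IsTriangularCover q)
    (vt : V') (vb : V'') (h : p vt = q vb) :
    ∃! r : G' →g G'', IsTriangularCover r ∧ (∀ x : V', q (r x) = p x) ∧ r vt = vb := by
  classical
  have hconn := hsc.1
  -- choose a walk from the base point to every vertex
  let w0 : ∀ x : V', G'.Walk vt x := fun x => Classical.choice (hconn.preconnected vt x)
  -- the chain condition for mapped supports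
  have chainA : ∀ {x : V'} (w : G'.Walk vt x),
      List.Chain G.Adj (q vb) ((w.map p).support.tail) := by
    intro x w
    have hc := (w.map p).isChain_adj_support
    rw [Walk.support_eq_cons (w.map p)] at hc
    rw [show q vb = p vt from h.symm]
    exact hc
  -- the endpoint of the lifted walk lies over the endpoint
  have foldq : ∀ {x : V'} (w : G'.Walk vt x),
      q (List.foldl (tstep hq) vb ((w.map p).support.tail)) = p x := by
    intro x w
    rw [fold_q hq _ _ (chainA w)]
    have h2 := List.getLast?_eq_getLast (l := (w.map p).support) (by simp)
    rw [Walk.getLast_support (w.map p)] at h2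
    rw [← h, ← @List.getLastD_cons _ (p vt) (p vt) _, ← Walk.support_eq_cons (w.map p),
      List.getLastD_eq_getLast?, h2]
    rfl
  -- well-definedness: the lifted endpoint does not depend on the chosen walk
  have key : ∀ (x : V') (w : G'.Walk vt x),
      List.foldl (tstep hq) vb ((w.map p).support.tail) =
        List.foldl (tstep hq) vb (((w0 x).map p).support.tail) := by
    intro x w
    set A := (w.map p).support with hAdef
    set B := ((w0 x).map p).support with hBdef
    set c := w.append (w0 x).reverse with hcdef
    have hcs : c.support = vt :: c.support.tail := Walk.support_eq_cons c
    have hchain : (vt :: c.support.tail).Chain' G'.Adj := by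
      rw [← hcs]; exact c.isChain_adj_support
    have hlast : (vt :: c.support.tail).getLast (List.cons_ne_nil _ _) = vt := by
      have h2 := List.getLast?_eq_getLast (l := c.support) (by simp)
      rw [Walk.getLast_support c] at h2
      have h4 : (vt :: c.support.tail).getLast? = some vt := by rw [← hcs]; exact h2
      rw [List.getLast?_eq_getLast (List.cons_ne_nil _ _)] at h4
      exact Option.some_injective _ h4
    have hhom := hsc.2 vt c.support.tail hchain hlast
    have hhomG : Homotopic G ((vt :: c.support.tail).map p) ([vt].map p) :=
      homotopic_map p hhom
    rw [← hcs] at hhomG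
    have hmchain : (c.support.map p).Chain' G.Adj := by
      rw [← Walk.support_map]; exact (c.map p).isChain_adj_support
    have hhead : (c.support.map p).head? = some (q vb) := by
      rw [hcs, List.map_cons, List.head?_cons, h]
    have hfold := (homotopic_fold hq hhomG hmchain).2.2 vb hhead
    simp only [List.map_cons, List.map_nil, List.tail_cons, List.foldl_nil] at hfold
    -- decompose the support of c
    have hdecomp : c.support.map p = A ++ B.reverse.tail := by
      rw [hAdef, hBdef, Walk.support_map, Walk.support_map, hcdef, Walk.support_append,
        Walk.support_reverse, List.map_append, List.map_tail, List.map_reverse]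
    have hA : A = q vb :: A.tail := by
      rw [← h]; exact Walk.support_eq_cons (w.map p)
    have htail : (c.support.map p).tail = A.tail ++ B.reverse.tail := by
      rw [hdecomp, List.tail_append_of_ne_nil (by rw [hAdef]; simp)]
    rw [htail, List.foldl_append] at hfold
    set y₁ := List.foldl (tstep hq) vb A.tail with hy₁def
    -- y₁ lies over p x
    have hy1 : q y₁ = p x := foldq w
    have hB : B = q vb :: B.tail := by
      rw [← h]; exact Walk.support_eq_cons ((w0 x).map p)
    have hBlast : B.getLast? = some (p x) := by
      rw [hBdef, List.getLast?_eq_getLast (l := ((w0 x).map p).support) (by simp), Walk.getLast_support]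
    -- the reversed list
    have hR : B.reverse = q y₁ :: B.reverse.tail := by
      refine (List.cons_head?_tail ?_).symm
      rw [List.head?_reverse, hBlast, hy1]
      rfl
    have hflip : (flip G.Adj : V → V → Prop) = G.Adj := by
      funext u v
      exact propext (G.adj_comm v u)
    have hRchain : List.Chain G.Adj (q y₁) B.reverse.tail := by
      have hc1 : B.reverse.Chain' G.Adj := by
        simp only [List.Chain']
        rw [List.isChain_reverse, show (fun a b => G.Adj b a) = G.Adj from hflip, hBdef]
        exact ((w0 x).map p).isChain_adj_support
      rw [hR] at hc1
      exact hc1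
    have hrevfold := fold_reverse hq B.reverse.tail y₁ hRchain
    rw [← hR, List.reverse_reverse, hfold] at hrevfold
    rw [hB] at hrevfold
    rw [List.tail_cons] at hrevfold
    exact hrevfold.symm
  -- the lifting function
  set rf : V' → V'' := fun x => List.foldl (tstep hq) vb (((w0 x).map p).support.tail)
    with hrfdef
  have hkey : ∀ (x : V') (w : G'.Walk vt x),
      rf x = List.foldl (tstep hq) vb ((w.map p).support.tail) := fun x w => (key x w).symm
  have hrq : ∀ x : V', q (rf x) = p x := fun x => foldq (w0 x)
  have hrvt : rf vt = vb := by
    rw [hkey vt Walk.nil]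
    simp
  have hstep_rf : ∀ (a b : V') (hab : G'.Adj a b), rf b = tstep hq (rf a) (p b) := by
    intro a b hab
    rw [hkey b ((w0 a).append hab.toWalk)]
    rw [Walk.map_append, Walk.support_append]
    have hsup : ((hab.toWalk).map p).support.tail = [p b] := rfl
    rw [hsup, List.tail_append_of_ne_nil (by simp), List.foldl_append]
    rw [← hkey a (w0 a)]
    rfl
  have hadj : ∀ (a b : V'), G'.Adj a b → G''.Adj (rf a) (rf b) := by
    intro a b hab
    rw [hstep_rf a b hab]
    exact tstep_adj hq (by rw [hrq a]; exact p.map_adj hab)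
  set r : G' →g G'' := ⟨rf, fun {a b} hab => hadj a b hab⟩ with hrdef
  have hrapp : ∀ x : V', r x = rf x := fun _ => rfl
  -- r is a triangular cover
  have hrcov : IsTriangularCover r := by
    constructor
    · exact hsc.1
    · exact hq.connDom
    · intro v x hx y hy hxy
      refine hp.injOn v hx hy ?_
      have : q (r x) = q (r y) := by rw [hxy]
      rwa [hrapp, hrapp, hrq, hrq] at this
    · intro v u hu
      have hqu : q u ∈ closedNbhd G (p v) := by
        rcases mem_closedNbhd_iff.mp hu with he | ha
        · rw [he, hrapp, hrq]; exact mem_closedNbhd_self_s8 _ _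
        · refine adj_mem_closedNbhd ?_
          have := q.map_adj ha
          rwa [hrapp, hrq] at this
      obtain ⟨x, hx, hpx⟩ := hp.surjOn v hqu
      refine ⟨x, hx, ?_⟩
      have hrx : r x ∈ closedNbhd G'' (r v) := by
        rcases mem_closedNbhd_iff.mp hx with he | ha
        · rw [he]; exact mem_closedNbhd_self_s8 _ _
        · exact adj_mem_closedNbhd (r.map_adj ha)
      refine hq.injOn (r v) hrx hu ?_
      rw [hrapp, hrq, hpx]
    · intro v x y hx hy hadj'
      refine hp.reflectAdj v x y hx hy ?_
      have := q.map_adj hadj'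
      rwa [hrapp, hrapp, hrq, hrq] at this
  refine ⟨r, ⟨hrcov, fun x => by rw [hrapp, hrq], hrvt⟩, ?_⟩
  rintro r' ⟨hr'cov, hr'q, hr'vt⟩
  have huniq : ∀ (aa bb : V') (w : G'.Walk aa bb),
      r' bb = List.foldl (tstep hq) (r' aa) ((w.map p).support.tail) := by
    intro aa bb w
    induction w with
    | nil => simp
    | @cons u v ww hab w2 ih =>
      have hru : r' v = tstep hq (r' u) (p v) :=
        tstep_eq hq (show G.Adj (q (r' u)) (p v) by rw [hr'q u]; exact p.map_adj hab)
          (adj_mem_closedNbhd (r'.map_adj hab)) (hr'q v)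
      rw [Walk.map_cons, Walk.support_cons, List.tail_cons,
        Walk.support_eq_cons (w2.map p), List.foldl_cons, ← hru]
      exact ih
  refine DFunLike.ext r' r fun x => ?_
  rw [huniq vt x (w0 x), hr'vt, hrapp]
end

section
/- A universal triangular covering map p : G̃ → G is Galois with respect to its deck transformation group Γ = {γ ∈ Aut(G̃) : p ∘ γ = p}: the fibres of p are exactly the orbits of Γ acting on V(G̃). In particular, G̃/Γ ≅ G. -/
open SimpleGraph

/-- Two vertices are related by a deck transformation of `p`. -/
def DeckRel {V' V : Type*} {G' : SimpleGraph V'} {G : SimpleGraph V}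
    (p : G' →g G) (x y : V') : Prop :=
  ∃ γ : G' ≃g G', (∀ z : V', p (γ z) = p z) ∧ γ x = y

/-- The quotient graph of `G'` by the deck transformation group: vertices are the
orbits, two distinct orbits being adjacent iff they contain adjacent representatives. -/
def quotGraph {V' V : Type*} {G' : SimpleGraph V'} {G : SimpleGraph V}
    (p : G' →g G) : SimpleGraph (Quot (DeckRel p)) where
  Adj c d := c ≠ d ∧ ∃ x y : V', Quot.mk _ x = c ∧ Quot.mk _ y = d ∧ G'.Adj x y
  symm := by
    constructor
    rintro c d ⟨hne, x, y, hx, hy, hadj⟩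
    exact ⟨hne.symm, y, x, hy, hx, hadj.symm⟩
  loopless := by constructor; rintro c ⟨hne, -⟩; exact hne rfl


section Aux

variable {V' V : Type*} {G' : SimpleGraph V'} {G : SimpleGraph V}

lemma self_mem_closedNbhd (G : SimpleGraph V) (v : V) : v ∈ closedNbhd G v :=
  Set.mem_insert _ _

lemma adj_mem_closedNbhd_s10 {u v : V} (h : G.Adj u v) : v ∈ closedNbhd G u :=
  Set.mem_insert_of_mem _ h

lemma mem_closedNbhd_iff_s10 {u v : V} : v ∈ closedNbhd G u ↔ v = u ∨ G.Adj u v := by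
  simp [closedNbhd]

variable (p : G' →g G)

/-- `L` is a lift of the vertex list `l` along `p`. -/
def IsLift (L : List V') (l : List V) : Prop :=
  L.map p = l ∧ L.Chain' G'.Adj

variable {p}

lemma lift_exists (hp : IsTriangularCover p) :
    ∀ (l : List V) (x : V'), l.Chain' G.Adj → l.head? = some (p x) →
      ∃ L, IsLift p L l ∧ L.head? = some x := by
  intro l
  induction l with
  | nil => intro x _ h; simp at h
  | cons v rest ih =>
    intro x hc hh
    simp only [List.head?_cons, Option.some.injEq] at hh
    subst hh
    cases rest with
    | nil => exact ⟨[x], ⟨by simp, List.isChain_singleton _⟩, by simp⟩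
    | cons v' t =>
      have hadj : G.Adj (p x) v' := (List.isChain_cons_cons.mp hc).1
      have hv' : v' ∈ closedNbhd G (p x) := adj_mem_closedNbhd_s10 hadj
      obtain ⟨x', hx'mem, hx'⟩ := hp.surjOn x hv'
      have hxx' : G'.Adj x x' := by
        rcases mem_closedNbhd_iff_s10.mp hx'mem with h | h
        · exact absurd (hx' ▸ h ▸ rfl) hadj.ne
        · exact h
      obtain ⟨L', ⟨hmap, hch⟩, hhead⟩ := ih x' (List.isChain_cons_cons.mp hc).2 (by simp [hx'])
      refine ⟨x :: L', ⟨by simp [hmap], List.isChain_cons.mpr ⟨?_, hch⟩⟩, rfl⟩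
      intro y hy
      rw [hhead, Option.mem_some_iff] at hy
      subst hy; exact hxx'

lemma lift_unique_s10 (hp : IsTriangularCover p) :
    ∀ (l : List V) (L₁ L₂ : List V'), IsLift p L₁ l → IsLift p L₂ l →
      L₁.head? = L₂.head? → L₁ = L₂ := by
  intro l
  induction l with
  | nil =>
    rintro L₁ L₂ ⟨h₁, -⟩ ⟨h₂, -⟩ -
    rw [List.map_eq_nil_iff] at h₁ h₂; rw [h₁, h₂]
  | cons v rest ih =>
    rintro L₁ L₂ ⟨h₁, c₁⟩ ⟨h₂, c₂⟩ hh
    cases L₁ with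
    | nil => simp at h₁
    | cons a T₁ =>
      cases L₂ with
      | nil => simp at h₂
      | cons b T₂ =>
        simp only [List.head?_cons, Option.some.injEq] at hh
        subst hh
        simp only [List.map_cons, List.cons.injEq] at h₁ h₂
        cases T₁ with
        | nil =>
          cases T₂ with
          | nil => rfl
          | cons b' T₂' => rw [← h₂.2] at h₁; simp at h₁
        | cons a' T₁' =>
          cases T₂ with
          | nil => rw [← h₂.2] at h₁; simp at h₁
          | cons b' T₂' =>
            have hpa : p a' = p b' := by
              rw [← h₂.2] at h₁
              simpa using congrArg List.head? h₁.2
            have haa' : G'.Adj a a' := (List.isChain_cons_cons.mp c₁).1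
            have hab' : G'.Adj a b' := (List.isChain_cons_cons.mp c₂).1
            have heq : a' = b' :=
              hp.injOn a (adj_mem_closedNbhd_s10 haa') (adj_mem_closedNbhd_s10 hab') hpa
            subst heq
            have := ih (a' :: T₁') (a' :: T₂')
              ⟨h₁.2, c₁.tail⟩ ⟨h₂.2, c₂.tail⟩ rfl
            rw [this]

private lemma map_cons' {f : V' → V} {L : List V'} {a : V} {l : List V}
    (h : L.map f = a :: l) : ∃ x T, L = x :: T ∧ f x = a ∧ T.map f = l := by
  cases L with
  | nil => simp at h
  | cons x T => simp only [List.map_cons, List.cons.injEq] at h; exact ⟨x, T, rfl, h.1, h.2⟩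

lemma elemMove_lift (hp : IsTriangularCover p) {l m : List V} (h : ElemMove G l m)
    {L : List V'} (hL : IsLift p L l) :
    ∃ M, IsLift p M m ∧ M.head? = L.head? ∧ M.getLast? = L.getLast? := by
  obtain ⟨hmap, hch⟩ := hL
  cases h with
  | triRemove l₁ l₂ a b c h₁ h₂ h₃ =>
    obtain ⟨A, R, hLsplit, hA, hR⟩ := List.map_eq_append_iff.mp hmap
    subst hLsplit
    obtain ⟨ta, R₁, rfl, hpa, hR₁⟩ := map_cons' hR
    obtain ⟨tb, R₂, rfl, hpb, hR₂⟩ := map_cons' hR₁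
    obtain ⟨tc, B, rfl, hpc, hB⟩ := map_cons' hR₂
    rw [List.Chain', List.isChain_append] at hch
    obtain ⟨cA, cR, clink⟩ := hch
    have hab : G'.Adj ta tb := (List.isChain_cons_cons.mp cR).1
    have hbc : G'.Adj tb tc := (List.isChain_cons_cons.mp (List.isChain_cons_cons.mp cR).2).1
    have hac : G'.Adj ta tc := hp.reflectAdj tb ta tc (adj_mem_closedNbhd_s10 hab.symm)
      (adj_mem_closedNbhd_s10 hbc) (by rw [hpa, hpc]; exact h₃)
    refine ⟨A ++ ta :: tc :: B, ⟨by simp [hA, hpa, hpc, hB], ?_⟩, ?_, ?_⟩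
    · rw [List.Chain', List.isChain_append]
      exact ⟨cA, List.isChain_cons_cons.mpr
        ⟨hac, (List.isChain_cons_cons.mp (List.isChain_cons_cons.mp cR).2).2⟩, by simpa using clink⟩
    · cases A <;> simp
    · simp [List.getLast?_append, List.getLast?_cons_cons]
  | triInsert l₁ l₂ a b c h₁ h₂ h₃ =>
    obtain ⟨A, R, hLsplit, hA, hR⟩ := List.map_eq_append_iff.mp hmap
    subst hLsplit
    obtain ⟨ta, R₁, rfl, hpa, hR₁⟩ := map_cons' hR
    obtain ⟨tc, B, rfl, hpc, hB⟩ := map_cons' hR₁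
    rw [List.Chain', List.isChain_append] at hch
    obtain ⟨cA, cR, clink⟩ := hch
    have hac : G'.Adj ta tc := (List.isChain_cons_cons.mp cR).1
    have hbmem' : b ∈ closedNbhd G (p ta) := by rw [hpa]; exact adj_mem_closedNbhd_s10 h₁
    obtain ⟨tb, hbmem, hpb⟩ := hp.surjOn ta hbmem'
    have hne : tb ≠ ta := fun he => h₁.ne (by rw [← hpa, ← he, hpb])
    have htatb : G'.Adj ta tb := by
      rcases mem_closedNbhd_iff_s10.mp hbmem with h | h
      · exact absurd h hne
      · exact h
    have htbtc : G'.Adj tb tc := hp.reflectAdj ta tb tc hbmem (adj_mem_closedNbhd_s10 hac)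
      (by rw [hpb, hpc]; exact h₂)
    refine ⟨A ++ ta :: tb :: tc :: B, ⟨by simp [hA, hpa, hpb, hpc, hB], ?_⟩, ?_, ?_⟩
    · rw [List.Chain', List.isChain_append]
      exact ⟨cA, List.isChain_cons_cons.mpr ⟨htatb, List.isChain_cons_cons.mpr
        ⟨htbtc, (List.isChain_cons_cons.mp cR).2⟩⟩, by simpa using clink⟩
    · cases A <;> simp
    · simp [List.getLast?_append, List.getLast?_cons_cons]
  | deadEndRemove l₁ l₂ a b hadj =>
    obtain ⟨A, R, hLsplit, hA, hR⟩ := List.map_eq_append_iff.mp hmap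
    subst hLsplit
    obtain ⟨ta, R₁, rfl, hpa, hR₁⟩ := map_cons' hR
    obtain ⟨tb, R₂, rfl, hpb, hR₂⟩ := map_cons' hR₁
    obtain ⟨ta2, B, rfl, hpa', hB⟩ := map_cons' hR₂
    rw [List.Chain', List.isChain_append] at hch
    obtain ⟨cA, cR, clink⟩ := hch
    have hab : G'.Adj ta tb := (List.isChain_cons_cons.mp cR).1
    have hba : G'.Adj tb ta2 := (List.isChain_cons_cons.mp (List.isChain_cons_cons.mp cR).2).1
    have heq : ta2 = ta := hp.injOn tb (adj_mem_closedNbhd_s10 hba) (adj_mem_closedNbhd_s10 hab.symm)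
      (by rw [hpa, hpa'])
    subst heq
    refine ⟨A ++ ta2 :: B, ⟨by simp [hA, hpa, hB], ?_⟩, ?_, ?_⟩
    · rw [List.Chain', List.isChain_append]
      exact ⟨cA, (List.isChain_cons_cons.mp (List.isChain_cons_cons.mp cR).2).2, by simpa using clink⟩
    · cases A <;> simp
    · simp [List.getLast?_append, List.getLast?_cons_cons]
  | deadEndInsert l₁ l₂ a b hadj =>
    obtain ⟨A, R, hLsplit, hA, hR⟩ := List.map_eq_append_iff.mp hmap
    subst hLsplit
    obtain ⟨ta, B, rfl, hpa, hB⟩ := map_cons' hR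
    rw [List.Chain', List.isChain_append] at hch
    obtain ⟨cA, cR, clink⟩ := hch
    have hbmem' : b ∈ closedNbhd G (p ta) := by rw [hpa]; exact adj_mem_closedNbhd_s10 hadj
    obtain ⟨tb, hbmem, hpb⟩ := hp.surjOn ta hbmem'
    have hne : tb ≠ ta := fun he => hadj.ne (by rw [← hpa, ← he, hpb])
    have htatb : G'.Adj ta tb := by
      rcases mem_closedNbhd_iff_s10.mp hbmem with h | h
      · exact absurd h hne
      · exact h
    refine ⟨A ++ ta :: tb :: ta :: B, ⟨by simp [hA, hpa, hpb, hB], ?_⟩, ?_, ?_⟩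
    · rw [List.Chain', List.isChain_append]
      exact ⟨cA, List.isChain_cons_cons.mpr ⟨htatb, List.isChain_cons_cons.mpr ⟨htatb.symm, cR⟩⟩,
        by simpa using clink⟩
    · cases A <;> simp
    · simp [List.getLast?_append, List.getLast?_cons_cons]

lemma homotopic_lift (hp : IsTriangularCover p) {l m : List V} (h : Homotopic G l m) :
    ∀ L, IsLift p L l → ∃ M, IsLift p M m ∧ M.head? = L.head? ∧ M.getLast? = L.getLast? := by
  induction h with
  | refl => exact fun L hL => ⟨L, hL, rfl, rfl⟩
  | tail _ step ih =>
    intro L hL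
    obtain ⟨M, hM, h1, h2⟩ := ih L hL
    obtain ⟨N, hN, h3, h4⟩ := elemMove_lift hp step hM
    exact ⟨N, hN, h3.trans h1, h4.trans h2⟩

lemma elemMove_map {l m : List V'} (h : ElemMove G' l m) :
    ElemMove G (l.map p) (m.map p) := by
  cases h with
  | triRemove l₁ l₂ a b c h₁ h₂ h₃ =>
    simpa using ElemMove.triRemove (G := G) (l₁.map p) (l₂.map p) (p a) (p b) (p c)
      (p.map_adj h₁) (p.map_adj h₂) (p.map_adj h₃)
  | triInsert l₁ l₂ a b c h₁ h₂ h₃ =>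
    simpa using ElemMove.triInsert (G := G) (l₁.map p) (l₂.map p) (p a) (p b) (p c)
      (p.map_adj h₁) (p.map_adj h₂) (p.map_adj h₃)
  | deadEndRemove l₁ l₂ a b hadj =>
    simpa using ElemMove.deadEndRemove (G := G) (l₁.map p) (l₂.map p) (p a) (p b)
      (p.map_adj hadj)
  | deadEndInsert l₁ l₂ a b hadj =>
    simpa using ElemMove.deadEndInsert (G := G) (l₁.map p) (l₂.map p) (p a) (p b)
      (p.map_adj hadj)

lemma homotopic_map_s10 {l m : List V'} (h : Homotopic G' l m) :
    Homotopic G (l.map p) (m.map p) := by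
  induction h with
  | refl => exact Relation.ReflTransGen.refl
  | tail _ step ih => exact ih.tail (elemMove_map step)

private lemma head?_eq_cons {L : List V'} {u : V'} (h : L.head? = some u) :
    ∃ T, L = u :: T := by
  cases L with
  | nil => simp at h
  | cons a t =>
    simp only [List.head?_cons, Option.some.injEq] at h
    exact ⟨t, by rw [h]⟩

lemma monodromy (hp : IsTriangularCover p) (hsc : TriSimplyConnected G')
    {x z y : V'} (s₁ s₂ L₁ L₂ : List V')
    (hc₁ : s₁.Chain' G'.Adj) (hc₂ : s₂.Chain' G'.Adj)
    (hh₁ : s₁.head? = some x) (hh₂ : s₂.head? = some x)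
    (hl₁ : s₁.getLast? = some z) (hl₂ : s₂.getLast? = some z)
    (hL₁ : IsLift p L₁ (s₁.map p)) (hL₂ : IsLift p L₂ (s₂.map p))
    (hLh₁ : L₁.head? = some y) (hLh₂ : L₂.head? = some y) :
    L₁.getLast? = L₂.getLast? := by
  classical
  obtain ⟨s₁', rfl⟩ := head?_eq_cons hh₁
  obtain ⟨L₁', rfl⟩ := head?_eq_cons hLh₁
  -- the reversed second walk is z :: r0
  have hrh : s₂.reverse.head? = some z := by rw [List.head?_reverse]; exact hl₂
  obtain ⟨r0, hr0⟩ := head?_eq_cons hrh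
  have hrc : (z :: r0).Chain' G'.Adj := by
    rw [← hr0, List.Chain', List.isChain_reverse]
    exact hc₂.imp fun a b hab => hab.symm
  have hrl : (z :: r0).getLast? = some x := by
    rw [← hr0, List.getLast?_reverse]; exact hh₂
  -- the closed walk c
  have hcc : ((x :: s₁') ++ r0).Chain' G'.Adj := by
    rw [List.Chain', List.isChain_append]
    refine ⟨hc₁, hrc.tail, ?_⟩
    intro u hu w hw
    rw [hl₁, Option.mem_some_iff] at hu
    subst hu
    exact (List.isChain_cons.mp hrc).1 w hw
  have hclast : ((x :: s₁') ++ r0).getLast? = some x := by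
    rw [List.getLast?_append]
    cases r0 with
    | nil =>
      simp only [List.getLast?_nil, Option.none_or]
      simp only [List.getLast?_singleton, Option.some.injEq] at hrl
      rw [hl₁, hrl]
    | cons u t =>
      rw [List.getLast?_cons_cons] at hrl
      simp [hrl]
  -- the closed walk is homotopic to the trivial walk
  have hhom : Homotopic G' ((x :: s₁') ++ r0) [x] := by
    have hform : (x :: s₁') ++ r0 = x :: (s₁' ++ r0) := rfl
    rw [hform]
    refine hsc.2 x (s₁' ++ r0) (hform ▸ hcc) ?_
    have := hclast
    rw [hform, List.getLast?_eq_getLast (List.cons_ne_nil _ _)] at this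
    exact Option.some.inj this
  -- last of L₁
  obtain ⟨e₁, he₁⟩ : ∃ e, (y :: L₁').getLast? = some e :=
    ⟨_, List.getLast?_eq_getLast (List.cons_ne_nil _ _)⟩
  have hpe₁ : p e₁ = p z := by
    have h1 : ((y :: L₁').map p).getLast? = ((x :: s₁').map p).getLast? := by rw [hL₁.1]
    rw [List.getLast?_map, List.getLast?_map, he₁, hl₁] at h1
    simpa using h1
  -- lift of (z :: r0).map p starting at e₁
  obtain ⟨L₃, hL₃, hL₃h⟩ := lift_exists hp ((z :: r0).map p) e₁
    (List.isChain_map_of_isChain _ (fun a b hab => p.map_adj hab) hrc)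
    (by rw [List.head?_map, List.head?_cons, hpe₁]; rfl)
  obtain ⟨L₃', rfl⟩ := head?_eq_cons hL₃h
  have hL₃map : L₃'.map p = r0.map p := by
    have := hL₃.1
    simp only [List.map_cons, List.cons.injEq] at this
    exact this.2
  -- the combined lift M of c.map p
  have hM : IsLift p ((y :: L₁') ++ L₃') (((x :: s₁') ++ r0).map p) := by
    constructor
    · rw [List.map_append, List.map_append, hL₁.1, hL₃map]
    · rw [List.Chain', List.isChain_append]
      refine ⟨hL₁.2, hL₃.2.tail, ?_⟩
      intro u hu w hw
      rw [he₁, Option.mem_some_iff] at hu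
      subst hu
      exact (List.isChain_cons.mp hL₃.2).1 w hw
  obtain ⟨N, hN, hNh, hNl⟩ := homotopic_lift hp (homotopic_map_s10 hhom) _ hM
  -- N is a lift of [p x] starting at y, so N = [y]
  obtain ⟨n, rfl⟩ : ∃ n, N = [n] := by
    have := hN.1
    cases N with
    | nil => simp at this
    | cons u t =>
      cases t with
      | nil => exact ⟨u, rfl⟩
      | cons v' t' => simp at this
  have hny : n = y := by simpa using hNh
  have hMl : ((y :: L₁') ++ L₃').getLast? = some y := by rw [← hNl]; simp [hny]
  have hL₃l : (e₁ :: L₃').getLast? = some y := by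
    cases L₃' with
    | nil =>
      simp only [List.append_nil] at hMl
      rw [he₁] at hMl
      simpa using hMl
    | cons u t =>
      rw [List.getLast?_cons_cons]
      rw [List.getLast?_append] at hMl
      simpa using hMl
  -- reverse of L₃ is a lift of s₂.map p starting at y
  have hrev : IsLift p (e₁ :: L₃').reverse (s₂.map p) := by
    constructor
    · rw [List.map_reverse, hL₃.1, ← hr0, List.map_reverse, List.reverse_reverse]
    · rw [List.Chain', List.isChain_reverse]
      exact hL₃.2.imp fun a b hab => hab.symm
  have hreq : (e₁ :: L₃').reverse = L₂ :=
    lift_unique_s10 hp (s₂.map p) _ _ hrev hL₂ (by rw [List.head?_reverse, hL₃l, hLh₂])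
  rw [← hreq, List.getLast?_reverse, List.head?_cons]
  exact he₁

variable (p) in
/-- `z'` is the image of `z` under the deck-type correspondence sending `x` to `y`. -/
def DeckSpec (x y z z' : V') : Prop :=
  ∃ s L : List V', s.Chain' G'.Adj ∧ s.head? = some x ∧ s.getLast? = some z ∧
    IsLift p L (s.map p) ∧ L.head? = some y ∧ L.getLast? = some z'

lemma deckSpec_unique (hp : IsTriangularCover p) (hsc : TriSimplyConnected G')
    {x y z z₁ z₂ : V'} (h₁ : DeckSpec p x y z z₁) (h₂ : DeckSpec p x y z z₂) : z₁ = z₂ := by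
  obtain ⟨s₁, L₁, c₁, hh₁, hl₁, hL₁, hLh₁, hLl₁⟩ := h₁
  obtain ⟨s₂, L₂, c₂, hh₂, hl₂, hL₂, hLh₂, hLl₂⟩ := h₂
  have := monodromy hp hsc s₁ s₂ L₁ L₂ c₁ c₂ hh₁ hh₂ hl₁ hl₂ hL₁ hL₂ hLh₁ hLh₂
  rw [hLl₁, hLl₂] at this
  exact Option.some.inj this

lemma deckSpec_exists (hp : IsTriangularCover p) {x y : V'} (hxy : p x = p y) :
    ∀ z : V', ∃ z', DeckSpec p x y z z' := by
  intro z
  obtain ⟨w⟩ := hp.connDom.preconnected x z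
  have hch : w.support.Chain' G'.Adj := w.isChain_adj_support
  have hh : w.support.head? = some x := by rw [w.support_eq_cons]; rfl
  have hl : w.support.getLast? = some z := by
    rw [List.getLast?_eq_getLast w.support_ne_nil, w.getLast_support]
  obtain ⟨L, hL, hLh⟩ := lift_exists hp (w.support.map p) y
    (List.isChain_map_of_isChain _ (fun a b hab => p.map_adj hab) hch)
    (by rw [List.head?_map, hh, ← hxy]; rfl)
  obtain ⟨L0, rfl⟩ := head?_eq_cons hLh
  exact ⟨(y :: L0).getLast (List.cons_ne_nil _ _), w.support, y :: L0, hch, hh, hl, hL, rfl,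
    List.getLast?_eq_getLast (List.cons_ne_nil _ _)⟩

lemma deckSpec_p {x y z z' : V'} (h : DeckSpec p x y z z') : p z' = p z := by
  obtain ⟨s, L, _, _, hl, hL, _, hLl⟩ := h
  have h1 := congrArg List.getLast? hL.1
  rw [List.getLast?_map, List.getLast?_map, hLl, hl] at h1
  simpa using h1

lemma deckSpec_symm {x y z z' : V'} (h : DeckSpec p x y z z') : DeckSpec p y x z' z := by
  obtain ⟨s, L, cs, hh, hl, hL, hLh, hLl⟩ := h
  exact ⟨L, s, hL.2, hLh, hLl, ⟨hL.1.symm, cs⟩, hh, hl⟩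

lemma deckSpec_base {x y : V'} (hxy : p x = p y) : DeckSpec p x y x y :=
  ⟨[x], [y], List.isChain_singleton _, rfl, rfl, ⟨by simp [hxy], List.isChain_singleton _⟩, rfl, rfl⟩

lemma deckSpec_adj (hp : IsTriangularCover p) {x y z z' w : V'}
    (h : DeckSpec p x y z w) (hzz' : G'.Adj z z') :
    ∃ w', DeckSpec p x y z' w' ∧ G'.Adj w w' := by
  have hpw : p w = p z := deckSpec_p h
  obtain ⟨s, L, cs, hh, hl, hL, hLh, hLl⟩ := h
  have hmem : p z' ∈ closedNbhd G (p w) := by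
    rw [hpw]; exact adj_mem_closedNbhd_s10 (p.map_adj hzz')
  obtain ⟨w', hw'mem, hpw'⟩ := hp.surjOn w hmem
  have hne : w' ≠ w := fun he => (p.map_adj hzz').ne (by rw [← hpw, ← he, hpw'])
  have hadj : G'.Adj w w' := by
    rcases mem_closedNbhd_iff_s10.mp hw'mem with h | h
    · exact absurd h hne
    · exact h
  obtain ⟨s0, rfl⟩ := head?_eq_cons hh
  obtain ⟨L0, rfl⟩ := head?_eq_cons hLh
  refine ⟨w', ⟨(x :: s0) ++ [z'], (y :: L0) ++ [w'], ?_, rfl,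
    by rw [List.getLast?_concat], ⟨?_, ?_⟩, rfl, by rw [List.getLast?_concat]⟩, hadj⟩
  · rw [List.Chain', List.isChain_append]
    refine ⟨cs, by simp, ?_⟩
    intro u hu v' hv'
    rw [hl, Option.mem_some_iff] at hu
    simp only [List.head?_cons, Option.mem_some_iff] at hv'
    subst hu; subst hv'
    exact hzz'
  · rw [List.map_append, List.map_append, hL.1]
    simp [hpw']
  · rw [List.Chain', List.isChain_append]
    refine ⟨hL.2, by simp, ?_⟩
    intro u hu v' hv'
    rw [hLl, Option.mem_some_iff] at hu
    simp only [List.head?_cons, Option.mem_some_iff] at hv'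
    subst hu; subst hv'
    exact hadj

lemma deck_of_eq (hp : IsTriangularCover p) (hsc : TriSimplyConnected G')
    {x y : V'} (hxy : p x = p y) : DeckRel p x y := by
  classical
  choose f hf using deckSpec_exists hp hxy
  choose g hg using deckSpec_exists hp hxy.symm
  have hfp : ∀ z, p (f z) = p z := fun z => deckSpec_p (hf z)
  have hgf : ∀ z, g (f z) = z := fun z =>
    deckSpec_unique hp hsc (hg (f z)) (deckSpec_symm (hf z))
  have hfg : ∀ z, f (g z) = z := fun z =>
    deckSpec_unique hp hsc (hf (g z)) (deckSpec_symm (hg z))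
  have hfadj : ∀ {z z' : V'}, G'.Adj z z' → G'.Adj (f z) (f z') := by
    intro z z' h
    obtain ⟨w', hw', hadj⟩ := deckSpec_adj hp (hf z) h
    have : f z' = w' := deckSpec_unique hp hsc (hf z') hw'
    rw [this]; exact hadj
  have hgadj : ∀ {z z' : V'}, G'.Adj z z' → G'.Adj (g z) (g z') := by
    intro z z' h
    obtain ⟨w', hw', hadj⟩ := deckSpec_adj hp (hg z) h
    have : g z' = w' := deckSpec_unique hp hsc (hg z') hw'
    rw [this]; exact hadj
  refine ⟨⟨⟨f, g, hgf, hfg⟩, ?_⟩, hfp, ?_⟩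
  · intro a b
    constructor
    · intro h
      have h' : G'.Adj (f a) (f b) := h
      have := hgadj h'
      rwa [hgf, hgf] at this
    · exact hfadj
  · exact deckSpec_unique hp hsc (hf x) (deckSpec_base hxy)

lemma p_surj (hp : IsTriangularCover p) : Function.Surjective p := by
  intro v
  obtain ⟨x₀⟩ := hp.connDom.nonempty
  obtain ⟨w⟩ := hp.connCod.preconnected (p x₀) v
  obtain ⟨L, hL, hLh⟩ := lift_exists hp w.support x₀ w.isChain_adj_support
    (by rw [w.support_eq_cons]; rfl)
  obtain ⟨L0, rfl⟩ := head?_eq_cons hLh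
  obtain ⟨e, he⟩ : ∃ e, (x₀ :: L0).getLast? = some e :=
    ⟨_, List.getLast?_eq_getLast (List.cons_ne_nil _ _)⟩
  refine ⟨e, ?_⟩
  have h1 := congrArg List.getLast? hL.1
  rw [List.getLast?_map, he] at h1
  have hws : w.support.getLast? = some v := by
    rw [List.getLast?_eq_getLast w.support_ne_nil, w.getLast_support]
  rw [hws] at h1
  simpa using h1

end Aux

/-- A universal triangular covering map is Galois with its deck transformation group:
the fibres are exactly the orbits, and the quotient graph is isomorphic to `G`. -/
theorem universal_cover_galois {V' V : Type*} {G' : SimpleGraph V'} {G : SimpleGraph V}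
    (p : G' →g G) (hp : IsTriangularCover p) (hsc : TriSimplyConnected G') :
    (∀ x y : V', p x = p y ↔ DeckRel p x y) ∧ Nonempty (quotGraph p ≃g G) := by
  classical
  have key : ∀ x y : V', p x = p y ↔ DeckRel p x y := by
    intro x y
    constructor
    · exact deck_of_eq hp hsc
    · rintro ⟨γ, hγ, rfl⟩
      exact (hγ x).symm
  refine ⟨key, ?_⟩
  have hresp : ∀ a b : V', DeckRel p a b → p a = p b := fun a b h => (key a b).mpr h
  let f : Quot (DeckRel p) → V := Quot.lift p hresp
  have hinj : Function.Injective f := by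
    refine Quot.ind fun x => Quot.ind fun y h => ?_
    exact Quot.sound ((key x y).mp h)
  have hsurj : Function.Surjective f := by
    intro v
    obtain ⟨x, hx⟩ := p_surj hp v
    exact ⟨Quot.mk _ x, hx⟩
  have hadj : ∀ a b : Quot (DeckRel p), G.Adj (f a) (f b) ↔ (quotGraph p).Adj a b := by
    refine Quot.ind fun x => Quot.ind fun y => ?_
    constructor
    · intro h
      have h' : G.Adj (p x) (p y) := h
      have hmem : p y ∈ closedNbhd G (p x) := adj_mem_closedNbhd_s10 h'
      obtain ⟨y', hy'mem, hpy'⟩ := hp.surjOn x hmem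
      have hne : y' ≠ x := by
        intro he
        apply h'.ne
        rw [← hpy', he]
      have hadj' : G'.Adj x y' := (mem_closedNbhd_iff_s10.mp hy'mem).resolve_left hne
      refine ⟨?_, x, y', rfl, ?_, hadj'⟩
      · intro hq
        exact h'.ne (congrArg f hq)
      · exact (Quot.sound ((key y y').mp hpy'.symm)).symm
    · rintro ⟨-, aa, bb, ha, hb, hadj'⟩
      have h1 : f (Quot.mk _ aa) = p aa := rfl
      have h2 : f (Quot.mk _ bb) = p bb := rfl
      rw [← ha, ← hb, h1, h2]
      exact p.map_adj hadj'
  exact ⟨⟨Equiv.ofBijective f ⟨hinj, hsurj⟩, fun {a b} => hadj a b⟩⟩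
end

section
/- If G is a triangularly simply connected graph, then its clique graph kG is triangularly simply connected. -/
open SimpleGraph

section Red
variable {α : Type*}

open Classical in
noncomputable def red : List α → List α
  | [] => []
  | [a] => [a]
  | a :: b :: t => if a = b then red (b :: t) else a :: red (b :: t)

@[simp] lemma red_nil : red ([] : List α) = [] := by simp [red]
@[simp] lemma red_single (a : α) : red [a] = [a] := by simp [red]

lemma red_cons_cons_eq {a b : α} (h : a = b) (t : List α) :
    red (a :: b :: t) = red (b :: t) := by simp [red, h]

lemma red_cons_cons_ne {a b : α} (h : a ≠ b) (t : List α) :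
    red (a :: b :: t) = a :: red (b :: t) := by simp [red, h]

lemma red_ne_nil {l : List α} (h : l ≠ []) : red l ≠ [] := by
  induction l with
  | nil => simp at h
  | cons a t ih =>
    cases t with
    | nil => simp
    | cons b t' =>
      by_cases hab : a = b
      · rw [red_cons_cons_eq hab]; exact ih (by simp)
      · rw [red_cons_cons_ne hab]; simp

lemma red_head? (l : List α) : (red l).head? = l.head? := by
  induction l with
  | nil => simp
  | cons a t ih =>
    cases t with
    | nil => simp
    | cons b t' =>
      by_cases hab : a = b
      · rw [red_cons_cons_eq hab]; rw [ih]; simp [hab]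
      · rw [red_cons_cons_ne hab]; simp

lemma red_getLast? (l : List α) : (red l).getLast? = l.getLast? := by
  induction l with
  | nil => simp
  | cons a t ih =>
    cases t with
    | nil => simp
    | cons b t' =>
      by_cases hab : a = b
      · rw [red_cons_cons_eq hab, ih, List.getLast?_cons_cons]
      · rw [red_cons_cons_ne hab, List.getLast?_cons_cons, ← ih]
        have : red (b :: t') ≠ [] := red_ne_nil (by simp)
        obtain ⟨c, m, hm⟩ := List.exists_cons_of_ne_nil this
        rw [hm, List.getLast?_cons_cons]

lemma red_eq_self_of_chain'_ne {l : List α} (h : l.Chain' (· ≠ ·)) : red l = l := by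
  induction l with
  | nil => simp
  | cons a t ih =>
    cases t with
    | nil => simp
    | cons b t' =>
      have hab : a ≠ b := (List.isChain_cons_cons.mp h).1
      rw [red_cons_cons_ne hab, ih (List.isChain_cons_cons.mp h).2]

lemma red_head_cons (b : α) (t : List α) : red (b :: t) = b :: (red (b :: t)).tail := by
  have h := red_head? (b :: t)
  obtain ⟨c, m', hm'⟩ := List.exists_cons_of_ne_nil (red_ne_nil (l := b :: t) (by simp))
  rw [hm'] at h ⊢; simp at h; simp [h]

lemma red_append_eq {p m : List α} (hm : m ≠ []) (hb : p.getLast? = m.head?) :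
    red (p ++ m) = red p ++ (red m).tail := by
  induction p with
  | nil =>
    exfalso
    obtain ⟨c, t, rfl⟩ := List.exists_cons_of_ne_nil hm; simp at hb
  | cons a p' ih =>
    cases p' with
    | nil =>
      obtain ⟨b, t, rfl⟩ := List.exists_cons_of_ne_nil hm
      simp only [List.getLast?_singleton, List.head?_cons, Option.some.injEq] at hb
      rw [List.singleton_append, red_cons_cons_eq hb]
      subst hb
      simp only [red_single, List.singleton_append]
      conv_lhs => rw [red_head_cons]
    | cons c p'' =>
      have hgl : (c :: p'').getLast? = m.head? := by
        rw [← List.getLast?_cons_cons (a := a)]; exact hb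
      have ih' := ih hgl
      have h1 : (a :: c :: p'') ++ m = a :: c :: (p'' ++ m) := by simp
      have h2 : c :: (p'' ++ m) = (c :: p'') ++ m := by simp
      by_cases hac : a = c
      · rw [h1, red_cons_cons_eq hac, h2, ih', red_cons_cons_eq hac]
      · rw [h1, red_cons_cons_ne hac, h2, ih', red_cons_cons_ne hac, List.cons_append]

lemma red_append_ne {p m : List α} (hb : p.getLast? ≠ m.head?) :
    red (p ++ m) = red p ++ red m := by
  induction p with
  | nil => simp
  | cons a p' ih =>
    cases p' with
    | nil =>
      cases m with
      | nil => simp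
      | cons b t =>
        simp only [List.getLast?_singleton, List.head?_cons, Ne, Option.some.injEq] at hb
        rw [List.singleton_append, red_cons_cons_ne hb, red_single, List.singleton_append]
    | cons c p'' =>
      have hgl : (c :: p'').getLast? ≠ m.head? := by
        rw [← List.getLast?_cons_cons (a := a)]; exact hb
      have ih' := ih hgl
      have h1 : (a :: c :: p'') ++ m = a :: c :: (p'' ++ m) := by simp
      have h2 : c :: (p'' ++ m) = (c :: p'') ++ m := by simp
      by_cases hac : a = c
      · rw [h1, red_cons_cons_eq hac, h2, ih', red_cons_cons_eq hac]
      · rw [h1, red_cons_cons_ne hac, h2, ih', red_cons_cons_ne hac, List.cons_append]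

end Red

section GenericMoves
variable {W : Type*} {H : SimpleGraph W}

lemma ElemMove.symm {l l' : List W} (h : ElemMove H l l') : ElemMove H l' l := by
  cases h with
  | triRemove l₁ l₂ a b c h₁ h₂ h₃ => exact .triInsert l₁ l₂ a b c h₁ h₂ h₃
  | triInsert l₁ l₂ a b c h₁ h₂ h₃ => exact .triRemove l₁ l₂ a b c h₁ h₂ h₃
  | deadEndRemove l₁ l₂ a b h => exact .deadEndInsert l₁ l₂ a b h
  | deadEndInsert l₁ l₂ a b h => exact .deadEndRemove l₁ l₂ a b h

lemma Homotopic.symm {l l' : List W} (h : Homotopic H l l') : Homotopic H l' l := by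
  induction h with
  | refl => exact .refl
  | tail _ h ih => exact Relation.ReflTransGen.head h.symm ih

lemma ElemMove.append_left (p : List W) {l l' : List W} (h : ElemMove H l l') :
    ElemMove H (p ++ l) (p ++ l') := by
  cases h with
  | triRemove l₁ l₂ a b c h₁ h₂ h₃ =>
      simpa [List.append_assoc] using ElemMove.triRemove (G := H) (p ++ l₁) l₂ a b c h₁ h₂ h₃
  | triInsert l₁ l₂ a b c h₁ h₂ h₃ =>
      simpa [List.append_assoc] using ElemMove.triInsert (G := H) (p ++ l₁) l₂ a b c h₁ h₂ h₃
  | deadEndRemove l₁ l₂ a b h =>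
      simpa [List.append_assoc] using ElemMove.deadEndRemove (G := H) (p ++ l₁) l₂ a b h
  | deadEndInsert l₁ l₂ a b h =>
      simpa [List.append_assoc] using ElemMove.deadEndInsert (G := H) (p ++ l₁) l₂ a b h

lemma ElemMove.append_right {l l' : List W} (h : ElemMove H l l') (s : List W) :
    ElemMove H (l ++ s) (l' ++ s) := by
  cases h with
  | triRemove l₁ l₂ a b c h₁ h₂ h₃ =>
      simpa [List.append_assoc] using ElemMove.triRemove (G := H) l₁ (l₂ ++ s) a b c h₁ h₂ h₃
  | triInsert l₁ l₂ a b c h₁ h₂ h₃ =>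
      simpa [List.append_assoc] using ElemMove.triInsert (G := H) l₁ (l₂ ++ s) a b c h₁ h₂ h₃
  | deadEndRemove l₁ l₂ a b h =>
      simpa [List.append_assoc] using ElemMove.deadEndRemove (G := H) l₁ (l₂ ++ s) a b h
  | deadEndInsert l₁ l₂ a b h =>
      simpa [List.append_assoc] using ElemMove.deadEndInsert (G := H) l₁ (l₂ ++ s) a b h

lemma Homotopic.append_left (p : List W) {l l' : List W} (h : Homotopic H l l') :
    Homotopic H (p ++ l) (p ++ l') :=
  Relation.ReflTransGen.lift (p ++ ·) (fun _ _ h => ElemMove.append_left p h) _ _ h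

lemma Homotopic.append_right {l l' : List W} (h : Homotopic H l l') (s : List W) :
    Homotopic H (l ++ s) (l' ++ s) :=
  Relation.ReflTransGen.lift (· ++ s) (fun _ _ h => ElemMove.append_right h s) _ _ h

end GenericMoves

section Hstut
variable {W : Type*} (H : SimpleGraph W)

/-- Homotopy up to removal of consecutive duplicates. -/
def Hstut (l l' : List W) : Prop := Homotopic H (red l) (red l')

variable {H}

lemma Hstut.refl (l : List W) : Hstut H l l := Relation.ReflTransGen.refl

lemma Hstut.symm {l l' : List W} (h : Hstut H l l') : Hstut H l' l := Homotopic.symm h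

lemma Hstut.trans {l l' l'' : List W} (h : Hstut H l l') (h' : Hstut H l' l'') :
    Hstut H l l'' := Relation.ReflTransGen.trans h h'

lemma Hstut.append_right {m m' : List W} (h : Hstut H m m')
    (hl : m.getLast? = m'.getLast?) (s : List W) : Hstut H (m ++ s) (m' ++ s) := by
  rcases eq_or_ne s [] with rfl | hs
  · simpa using h
  · by_cases hb : m.getLast? = s.head?
    · unfold Hstut
      rw [red_append_eq hs hb, red_append_eq hs (hl ▸ hb)]
      exact Homotopic.append_right h _
    · unfold Hstut
      rw [red_append_ne hb, red_append_ne (hl ▸ hb)]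
      exact Homotopic.append_right h _

lemma eq_dropLast_append_of_getLast? {u : List W} {x : W} (h : u.getLast? = some x) :
    u = u.dropLast ++ [x] := by
  have hu : u ≠ [] := by rintro rfl; simp at h
  have h2 : u.getLast hu = x := by
    rw [List.getLast?_eq_getLast hu] at h; simpa using h
  conv_lhs => rw [← List.dropLast_append_getLast hu, h2]

lemma Hstut.append_left (p : List W) {m m' : List W} (h : Hstut H m m')
    (hh : m.head? = m'.head?) : Hstut H (p ++ m) (p ++ m') := by
  rcases eq_or_ne m [] with rfl | hm
  · have : m' = [] := by simpa using hh.symm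
    subst this; exact Hstut.refl _
  have hm' : m' ≠ [] := by
    rintro rfl
    rcases m with _ | ⟨c, t⟩
    · exact hm rfl
    · simp at hh
  by_cases hb : p.getLast? = m.head?
  · obtain ⟨x, hx⟩ : ∃ x, m.head? = some x := by
      obtain ⟨c, t, rfl⟩ := List.exists_cons_of_ne_nil hm; exact ⟨c, rfl⟩
    have hredp : (red p).getLast? = some x := by rw [red_getLast?, hb, hx]
    have hsplit : red p = (red p).dropLast ++ [x] := eq_dropLast_append_of_getLast? hredp
    have hredm : red m = x :: (red m).tail := by
      obtain ⟨c, t, rfl⟩ := List.exists_cons_of_ne_nil hm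
      simp only [List.head?_cons, Option.some.injEq] at hx
      rw [← hx] at *; exact red_head_cons c t
    have hredm' : red m' = x :: (red m').tail := by
      obtain ⟨c, t, rfl⟩ := List.exists_cons_of_ne_nil hm'
      have : c = x := by rw [hh] at hx; simpa using hx
      subst this; exact red_head_cons c t
    unfold Hstut
    rw [red_append_eq hm hb, red_append_eq hm' (hh ▸ hb)]
    rw [hsplit, List.append_assoc, List.append_assoc]
    have e1 : [x] ++ (red m).tail = red m := by
      rw [List.singleton_append]; exact hredm.symm
    have e2 : [x] ++ (red m').tail = red m' := by
      rw [List.singleton_append]; exact hredm'.symm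
    rw [e1, e2]
    exact Homotopic.append_left _ h
  · unfold Hstut
    rw [red_append_ne hb, red_append_ne (hh ▸ hb)]
    exact Homotopic.append_left _ h

lemma Hstut.congr (p : List W) {m m' : List W} (s : List W) (h : Hstut H m m')
    (hh : m.head? = m'.head?) (hl : m.getLast? = m'.getLast?) :
    Hstut H (p ++ m ++ s) (p ++ m' ++ s) := by
  rcases eq_or_ne m [] with rfl | hm
  · have : m' = [] := by
      rcases m' with _ | ⟨c, t⟩
      · rfl
      · simp at hh
    subst this; exact Hstut.refl _
  have hm' : m' ≠ [] := by
    rintro rfl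
    rcases m with _ | ⟨c, t⟩
    · exact hm rfl
    · simp at hh
  have h1 : Hstut H (m ++ s) (m' ++ s) := h.append_right hl s
  have hh1 : (m ++ s).head? = (m' ++ s).head? := by
    rw [List.head?_append_of_ne_nil _ hm, List.head?_append_of_ne_nil _ hm']; exact hh
  rw [List.append_assoc, List.append_assoc]
  exact h1.append_left p hh1

end Hstut



section CliqueLevel
variable {V : Type*} {G : SimpleGraph V}

/-- Auxiliary notion: adjacent or equal in `G`. -/
def AdjOrEq (G : SimpleGraph V) (u v : V) : Prop := u = v ∨ G.Adj u v

lemma isClique_of_adjOrEq_pair {u v : V} (h : AdjOrEq G u v) : G.IsClique {u, v} := by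
  rcases h with rfl | h
  · rw [Set.pair_eq_singleton]; exact isClique_singleton u
  · exact (isClique_pair.mpr fun _ => h)

lemma exists_maxClique_superset (s : Set V) (hs : G.IsClique s) :
    ∃ t, IsMaxClique G t ∧ s ⊆ t := by
  obtain ⟨m, hsm, hmax⟩ := zorn_subset_nonempty {t | G.IsClique t ∧ s ⊆ t}
    (fun c hc hchain hne => by
      refine ⟨⋃₀ c, ⟨?_, ?_⟩, fun t ht => Set.subset_sUnion_of_mem ht⟩
      · intro x hx y hy hxy
        obtain ⟨t₁, ht₁, hxt₁⟩ := hx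
        obtain ⟨t₂, ht₂, hyt₂⟩ := hy
        rcases hchain.total ht₁ ht₂ with h | h
        · exact (hc ht₂).1 (h hxt₁) hyt₂ hxy
        · exact (hc ht₁).1 hxt₁ (h hyt₂) hxy
      · obtain ⟨t₀, ht₀⟩ := hne
        exact (hc ht₀).2.trans (Set.subset_sUnion_of_mem ht₀))
    s ⟨hs, Set.Subset.rfl⟩
  refine ⟨m, ⟨hmax.prop.1, fun t ht hmt => ?_⟩, hmax.prop.2⟩
  exact Set.Subset.antisymm (hmax.le_of_ge ⟨ht, hsm.trans hmt⟩ hmt) hmt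

open Classical in
/-- A maximal clique extending `s` (junk value if `s` is not a clique). -/
noncomputable def extC (G : SimpleGraph V) (s : Set V) : CliqueVert G :=
  if h : G.IsClique s then
    ⟨(exists_maxClique_superset s h).choose, (exists_maxClique_superset s h).choose_spec.1⟩
  else
    ⟨(exists_maxClique_superset ∅ G.isClique_empty).choose,
      (exists_maxClique_superset ∅ G.isClique_empty).choose_spec.1⟩

lemma subset_extC {s : Set V} (h : G.IsClique s) : s ⊆ (extC G s).1 := by
  classical
  rw [extC]
  rw [dif_pos h]
  exact (exists_maxClique_superset s h).choose_spec.2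

/-- Canonical maximal clique containing a vertex. -/
noncomputable def Qv (G : SimpleGraph V) (v : V) : CliqueVert G := extC G {v}

/-- Canonical maximal clique containing a pair. -/
noncomputable def Rv (G : SimpleGraph V) (u v : V) : CliqueVert G := extC G {u, v}

lemma mem_Qv (v : V) : v ∈ (Qv G v).1 := subset_extC (isClique_singleton v) rfl

lemma Rv_comm (u v : V) : Rv G u v = Rv G v u := by
  unfold Rv; rw [Set.pair_comm]

lemma Rv_self (u : V) : Rv G u u = Qv G u := by
  unfold Rv Qv; rw [Set.pair_eq_singleton]

lemma mem_Rv_left {u v : V} (h : AdjOrEq G u v) : u ∈ (Rv G u v).1 :=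
  subset_extC (isClique_of_adjOrEq_pair h) (by simp)

lemma mem_Rv_right {u v : V} (h : AdjOrEq G u v) : v ∈ (Rv G u v).1 :=
  subset_extC (isClique_of_adjOrEq_pair h) (by simp)

lemma adjOrEq_of_mem_clique {A : CliqueVert G} {u v : V} (hu : u ∈ A.1) (hv : v ∈ A.1) :
    AdjOrEq G u v := by
  rcases eq_or_ne u v with rfl | h
  · exact Or.inl rfl
  · exact Or.inr (A.2.1 hu hv h)

lemma cg_adj {A B : CliqueVert G} (hne : A ≠ B) (h : (A.1 ∩ B.1).Nonempty) :
    (cliqueGraph G).Adj A B := ⟨hne, h⟩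

/-- The key local move in the clique graph: removing a middle clique that
intersects everything in sight, up to stuttering. -/
lemma hstut_mid {A X B : CliqueVert G} (hAX : (A.1 ∩ X.1).Nonempty)
    (hXB : (X.1 ∩ B.1).Nonempty) (hAB : (A.1 ∩ B.1).Nonempty) :
    Hstut (cliqueGraph G) [A, X, B] [A, B] := by
  rcases eq_or_ne A X with rfl | hAXne
  · unfold Hstut; rw [red_cons_cons_eq rfl]; exact Relation.ReflTransGen.refl
  rcases eq_or_ne X B with rfl | hXBne
  · unfold Hstut
    rw [red_cons_cons_ne hAXne, red_cons_cons_eq rfl, red_single, red_cons_cons_ne hAXne,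
      red_single]
    exact Relation.ReflTransGen.refl
  rcases eq_or_ne A B with rfl | hABne
  · unfold Hstut
    rw [red_cons_cons_ne hAXne, red_cons_cons_ne hXBne, red_single,
      red_cons_cons_eq rfl, red_single]
    have hmove := ElemMove.deadEndRemove (G := cliqueGraph G) [] [] A X (cg_adj hAXne hAX)
    exact Relation.ReflTransGen.single (by simpa using hmove)
  · unfold Hstut
    rw [red_cons_cons_ne hAXne, red_cons_cons_ne hXBne, red_single,
      red_cons_cons_ne hABne, red_single]
    have hmove := ElemMove.triRemove (G := cliqueGraph G) [] [] A X B
      (cg_adj hAXne hAX) (cg_adj hXBne hXB) (cg_adj hABne hAB)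
    exact Relation.ReflTransGen.single (by simpa using hmove)

lemma hstut_dead {A X : CliqueVert G} (hAX : (A.1 ∩ X.1).Nonempty) :
    Hstut (cliqueGraph G) [A, X, A] [A] := by
  rcases eq_or_ne A X with rfl | hAXne
  · unfold Hstut; rw [red_cons_cons_eq rfl, red_cons_cons_eq rfl]
    exact Relation.ReflTransGen.refl
  · unfold Hstut
    rw [red_cons_cons_ne hAXne, red_cons_cons_ne (Ne.symm hAXne), red_single]
    have hmove := ElemMove.deadEndRemove (G := cliqueGraph G) [] [] A X (cg_adj hAXne hAX)
    exact Relation.ReflTransGen.single (by simpa using hmove)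

/-- Lift of a vertex walk to a clique walk. -/
noncomputable def Lift (G : SimpleGraph V) : List V → List (CliqueVert G)
  | [] => []
  | [y] => [Qv G y]
  | y :: z :: t => Qv G y :: Rv G y z :: Lift G (z :: t)

noncomputable def LiftE (G : SimpleGraph V) : List V → V → List (CliqueVert G)
  | [], _ => []
  | [y], a => [Qv G y, Rv G y a]
  | y :: z :: t, a => Qv G y :: Rv G y z :: LiftE G (z :: t) a

lemma lift_split (l₁ : List V) (a : V) (m : List V) :
    Lift G (l₁ ++ a :: m) = LiftE G l₁ a ++ Lift G (a :: m) := by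
  induction l₁ with
  | nil => simp [LiftE]
  | cons y t ih =>
    cases t with
    | nil => simp [Lift, LiftE]
    | cons z t' =>
      have : (y :: z :: t') ++ a :: m = y :: z :: (t' ++ a :: m) := by simp
      rw [this, Lift, LiftE]
      have h2 : z :: (t' ++ a :: m) = (z :: t') ++ a :: m := by simp
      rw [h2, ih]
      simp

lemma lift_cons_head (y : V) (t : List V) :
    Lift G (y :: t) = Qv G y :: (Lift G (y :: t)).tail := by
  cases t with
  | nil => simp [Lift]
  | cons z t' => rw [Lift]; simp

lemma lift_getLast? (y : V) (t : List V) :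
    (Lift G (y :: t)).getLast? = ((y :: t).getLast?).map (Qv G) := by
  induction t generalizing y with
  | nil => simp [Lift]
  | cons z t' ih =>
    rw [Lift, List.getLast?_cons_cons]
    rw [show (Rv G y z :: Lift G (z :: t')).getLast? = (Lift G (z :: t')).getLast? from ?_, ih]
    · simp
    · rw [lift_cons_head z t', List.getLast?_cons_cons]

lemma liftE_eq (y : V) (t : List V) (a : V) :
    LiftE G (y :: t) a = Lift G (y :: t) ++ [Rv G ((y :: t).getLast (by simp)) a] := by
  induction t generalizing y with
  | nil => simp [LiftE, Lift]
  | cons z t' ih => rw [LiftE, Lift, ih]; simp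

lemma isClique_triple {a b c : V} (h₁ : G.Adj a b) (h₂ : G.Adj b c) (h₃ : G.Adj a c) :
    G.IsClique {a, b, c} := by
  intro x hx y hy hxy
  simp only [Set.mem_insert_iff, Set.mem_singleton_iff] at hx hy
  rcases hx with rfl | rfl | rfl <;> rcases hy with rfl | rfl | rfl <;>
    first
      | exact absurd rfl hxy
      | assumption
      | exact h₁.symm
      | exact h₂.symm
      | exact h₃.symm

lemma tri_core {a b c : V} (h₁ : G.Adj a b) (h₂ : G.Adj b c) (h₃ : G.Adj a c) :
    Hstut (cliqueGraph G) [Qv G a, Rv G a b, Qv G b, Rv G b c, Qv G c]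
      [Qv G a, Rv G a c, Qv G c] := by
  have hclique := isClique_triple h₁ h₂ h₃
  set T := extC G {a, b, c} with hT
  have hTa : a ∈ T.1 := subset_extC hclique (by simp)
  have hTb : b ∈ T.1 := subset_extC hclique (by simp)
  have hTc : c ∈ T.1 := subset_extC hclique (by simp)
  have hab : AdjOrEq G a b := Or.inr h₁
  have hbc : AdjOrEq G b c := Or.inr h₂
  have hac : AdjOrEq G a c := Or.inr h₃
  set Qa := Qv G a; set Qb := Qv G b; set Qc := Qv G c
  set Rab := Rv G a b; set Rbc := Rv G b c; set Rac := Rv G a c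
  have h12 : Hstut (cliqueGraph G) [Qa, Rab, Qb, Rbc, Qc] [Qa, Rab, Qb, T, Rbc, Qc] := by
    have := Hstut.congr [Qa, Rab] [Qc]
      ((hstut_mid (A := Qb) (X := T) (B := Rbc) ⟨b, mem_Qv b, hTb⟩
        ⟨b, hTb, mem_Rv_left hbc⟩ ⟨b, mem_Qv b, mem_Rv_left hbc⟩).symm) (by simp) (by simp)
    simpa using this
  have h23 : Hstut (cliqueGraph G) [Qa, Rab, Qb, T, Rbc, Qc] [Qa, Rab, T, Rbc, Qc] := by
    have := Hstut.congr [Qa] [Rbc, Qc]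
      (hstut_mid (A := Rab) (X := Qb) (B := T) ⟨b, mem_Rv_right hab, mem_Qv b⟩
        ⟨b, mem_Qv b, hTb⟩ ⟨b, mem_Rv_right hab, hTb⟩) (by simp) (by simp)
    simpa using this
  have h34 : Hstut (cliqueGraph G) [Qa, Rab, T, Rbc, Qc] [Qa, T, Rbc, Qc] := by
    have := Hstut.congr [] [Rbc, Qc]
      (hstut_mid (A := Qa) (X := Rab) (B := T) ⟨a, mem_Qv a, mem_Rv_left hab⟩
        ⟨a, mem_Rv_left hab, hTa⟩ ⟨a, mem_Qv a, hTa⟩) (by simp) (by simp)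
    simpa using this
  have h45 : Hstut (cliqueGraph G) [Qa, T, Rbc, Qc] [Qa, T, Qc] := by
    have := Hstut.congr [Qa] []
      (hstut_mid (A := T) (X := Rbc) (B := Qc) ⟨c, hTc, mem_Rv_right hbc⟩
        ⟨c, mem_Rv_right hbc, mem_Qv c⟩ ⟨c, hTc, mem_Qv c⟩) (by simp) (by simp)
    simpa using this
  have h65 : Hstut (cliqueGraph G) [Qa, Rac, T, Qc] [Qa, T, Qc] := by
    have := Hstut.congr [] [Qc]
      (hstut_mid (A := Qa) (X := Rac) (B := T) ⟨a, mem_Qv a, mem_Rv_left hac⟩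
        ⟨a, mem_Rv_left hac, hTa⟩ ⟨a, mem_Qv a, hTa⟩) (by simp) (by simp)
    simpa using this
  have h67 : Hstut (cliqueGraph G) [Qa, Rac, T, Qc] [Qa, Rac, Qc] := by
    have := Hstut.congr [Qa] []
      (hstut_mid (A := Rac) (X := T) (B := Qc) ⟨c, mem_Rv_right hac, hTc⟩
        ⟨c, hTc, mem_Qv c⟩ ⟨c, mem_Rv_right hac, mem_Qv c⟩) (by simp) (by simp)
    simpa using this
  exact ((((h12.trans h23).trans h34).trans h45).trans h65.symm).trans h67

lemma dead_core {a b : V} (h : G.Adj a b) :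
    Hstut (cliqueGraph G) [Qv G a, Rv G a b, Qv G b, Rv G a b, Qv G a] [Qv G a] := by
  have hab : AdjOrEq G a b := Or.inr h
  have s1 := Hstut.congr [Qv G a] [Qv G a]
    (hstut_dead (A := Rv G a b) (X := Qv G b) ⟨b, mem_Rv_right hab, mem_Qv b⟩)
    (by simp) (by simp)
  have s2 : Hstut (cliqueGraph G) [Qv G a, Rv G a b, Qv G a] [Qv G a] :=
    hstut_dead ⟨a, mem_Qv a, mem_Rv_left hab⟩
  exact (by simpa using s1 : Hstut (cliqueGraph G) _ _).trans s2

lemma lift_tri (l₁ l₂ : List V) {a b c : V} (h₁ : G.Adj a b) (h₂ : G.Adj b c)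
    (h₃ : G.Adj a c) :
    Hstut (cliqueGraph G) (Lift G (l₁ ++ a :: b :: c :: l₂)) (Lift G (l₁ ++ a :: c :: l₂)) := by
  rw [lift_split l₁ a (b :: c :: l₂), lift_split l₁ a (c :: l₂)]
  rw [show Lift G (a :: b :: c :: l₂)
      = Qv G a :: Rv G a b :: Qv G b :: Rv G b c :: Lift G (c :: l₂) from by
    rw [Lift, Lift]]
  rw [show Lift G (a :: c :: l₂) = Qv G a :: Rv G a c :: Lift G (c :: l₂) from by rw [Lift]]
  rw [lift_cons_head c l₂]
  have := Hstut.congr (LiftE G l₁ a) ((Lift G (c :: l₂)).tail) (tri_core h₁ h₂ h₃)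
    (by simp) (by simp)
  simpa using this

lemma lift_dead (l₁ l₂ : List V) {a b : V} (h : G.Adj a b) :
    Hstut (cliqueGraph G) (Lift G (l₁ ++ a :: b :: a :: l₂)) (Lift G (l₁ ++ a :: l₂)) := by
  rw [lift_split l₁ a (b :: a :: l₂), lift_split l₁ a l₂]
  rw [show Lift G (a :: b :: a :: l₂)
      = Qv G a :: Rv G a b :: Qv G b :: Rv G b a :: Lift G (a :: l₂) from by
    rw [Lift, Lift]]
  rw [Rv_comm b a, lift_cons_head a l₂]
  have := Hstut.congr (LiftE G l₁ a) ((Lift G (a :: l₂)).tail) (dead_core h)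
    (by simp) (by simp)
  simpa using this

lemma lift_elem {l l' : List V} (h : ElemMove G l l') :
    Hstut (cliqueGraph G) (Lift G l) (Lift G l') := by
  cases h with
  | triRemove l₁ l₂ a b c h₁ h₂ h₃ => exact lift_tri l₁ l₂ h₁ h₂ h₃
  | triInsert l₁ l₂ a b c h₁ h₂ h₃ => exact (lift_tri l₁ l₂ h₁ h₂ h₃).symm
  | deadEndRemove l₁ l₂ a b h => exact lift_dead l₁ l₂ h
  | deadEndInsert l₁ l₂ a b h => exact (lift_dead l₁ l₂ h).symm

lemma lift_hom {l l' : List V} (h : Homotopic G l l') :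
    Hstut (cliqueGraph G) (Lift G l) (Lift G l') := by
  induction h with
  | refl => exact Hstut.refl _
  | tail _ h ih => exact ih.trans (lift_elem h)

lemma lift_head? (y : V) (t : List V) : (Lift G (y :: t)).head? = some (Qv G y) := by
  rw [lift_cons_head y t]; rfl

lemma red_cons_congr {α : Type*} {l l' : List α} (x : α) (h : red l = red l')
    (hh : l.head? = l'.head?) : red (x :: l) = red (x :: l') := by
  cases l with
  | nil =>
    cases l' with
    | nil => rfl
    | cons a t => simp at hh
  | cons a t =>
    cases l' with
    | nil => simp at hh
    | cons a' t' =>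
      simp only [List.head?_cons, Option.some.injEq] at hh
      subst hh
      by_cases hxa : x = a
      · rw [red_cons_cons_eq hxa, red_cons_cons_eq hxa, h]
      · rw [red_cons_cons_ne hxa, red_cons_cons_ne hxa, h]

lemma red_lift_red (zs : List V) : red (Lift G zs) = red (Lift G (red zs)) := by
  induction zs with
  | nil => simp
  | cons y t ih =>
    cases t with
    | nil => simp
    | cons z t' =>
      by_cases hyz : y = z
      · subst hyz
        rw [red_cons_cons_eq rfl]
        rw [show Lift G (y :: y :: t') = Qv G y :: Rv G y y :: Lift G (y :: t') from by
          rw [Lift]]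
        rw [Rv_self y]
        rw [red_cons_cons_eq rfl]
        rw [show red (Qv G y :: Lift G (y :: t')) = red (Lift G (y :: t')) from ?_]
        · exact ih
        · conv_lhs => rw [lift_cons_head y t']
          rw [red_cons_cons_eq rfl, ← lift_cons_head y t']
      · rw [red_cons_cons_ne hyz]
        obtain ⟨rt, hrt⟩ : ∃ rt, red (z :: t') = z :: rt :=
          ⟨(red (z :: t')).tail, red_head_cons z t'⟩
        rw [hrt]
        rw [show Lift G (y :: z :: t') = Qv G y :: Rv G y z :: Lift G (z :: t') from by
          rw [Lift]]
        rw [show Lift G (y :: z :: rt) = Qv G y :: Rv G y z :: Lift G (z :: rt) from by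
          rw [Lift]]
        have hin : red (Lift G (z :: t')) = red (Lift G (z :: rt)) := by
          rw [ih, hrt]
        refine red_cons_congr _ (red_cons_congr _ hin ?_) rfl
        rw [lift_head?, lift_head?]

lemma chain'_adj_red {l : List V} (h : l.Chain' (AdjOrEq G)) : (red l).Chain' G.Adj := by
  induction l with
  | nil => simp [List.Chain']
  | cons a t ih =>
    cases t with
    | nil => simp [List.Chain']
    | cons b t' =>
      by_cases hab : a = b
      · rw [red_cons_cons_eq hab]; exact ih (List.isChain_cons_cons.mp h).2
      · rw [red_cons_cons_ne hab]
        refine List.isChain_cons.mpr ⟨fun y hy => ?_, ih (List.isChain_cons_cons.mp h).2⟩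
        rw [red_head?] at hy
        simp only [List.head?_cons, Option.mem_def, Option.some.injEq] at hy
        subst hy
        rcases (List.isChain_cons_cons.mp h).1 with heq | hadj
        · exact absurd heq hab
        · exact hadj

lemma master_contraction (hG : TriSimplyConnected G) (z₀ : V) (zt : List V)
    (hw : (z₀ :: zt).Chain' (AdjOrEq G))
    (hc : (z₀ :: zt).getLast (by simp) = z₀) :
    Hstut (cliqueGraph G) (Lift G (z₀ :: zt)) [Qv G z₀] := by
  obtain ⟨wt, hws⟩ : ∃ wt, red (z₀ :: zt) = z₀ :: wt :=
    ⟨(red (z₀ :: zt)).tail, red_head_cons z₀ zt⟩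
  have hchain : (z₀ :: wt).Chain' G.Adj := hws ▸ chain'_adj_red hw
  have hlast : (z₀ :: wt).getLast (by simp) = z₀ := by
    have h1 : (z₀ :: wt).getLast? = some z₀ := by
      rw [← hws, red_getLast?, List.getLast?_eq_getLast (l := z₀ :: zt) (by simp), hc]
    rw [List.getLast?_eq_getLast (l := z₀ :: wt) (by simp)] at h1
    simpa using h1
  have hhom : Homotopic G (z₀ :: wt) [z₀] := hG.2 z₀ wt hchain hlast
  have h1 : Hstut (cliqueGraph G) (Lift G (z₀ :: wt)) [Qv G z₀] := by
    have := lift_hom (G := G) hhom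
    rw [show Lift G [z₀] = [Qv G z₀] from by rw [Lift]] at this
    exact this
  have h2 : Hstut (cliqueGraph G) (Lift G (z₀ :: zt)) (Lift G (z₀ :: wt)) := by
    unfold Hstut
    rw [red_lift_red (z₀ :: zt), hws]
    exact Relation.ReflTransGen.refl
  exact h2.trans h1

section Pick
variable [Nonempty V]

open Classical in
noncomputable def pickx (A B : CliqueVert G) : V :=
  if h : (A.1 ∩ B.1).Nonempty then h.choose else Classical.arbitrary V

lemma pickx_mem {A B : CliqueVert G} (h : (A.1 ∩ B.1).Nonempty) :
    pickx A B ∈ A.1 ∩ B.1 := by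
  classical
  rw [pickx]
  rw [dif_pos h]
  exact h.choose_spec

noncomputable def vseq : List (CliqueVert G) → List V
  | A :: B :: t => pickx A B :: vseq (B :: t)
  | _ => []

lemma vseq_cons_cons (A B : CliqueVert G) (t : List (CliqueVert G)) :
    vseq (A :: B :: t) = pickx A B :: vseq (B :: t) := by rw [vseq]

lemma vseq_wchain : ∀ (t : List (CliqueVert G)) (A B : CliqueVert G),
    (A :: B :: t).Chain' (cliqueGraph G).Adj → (vseq (A :: B :: t)).Chain' (AdjOrEq G) := by
  intro t
  induction t with
  | nil => intro A B h; rw [vseq_cons_cons]; simp [vseq, List.Chain']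
  | cons C t' ih =>
    intro A B h
    rw [vseq_cons_cons]
    have h1 := (List.isChain_cons_cons.mp h).1
    have h2 := (List.isChain_cons_cons.mp h).2
    have h3 := (List.isChain_cons_cons.mp h2).1
    refine List.isChain_cons.mpr ⟨fun y hy => ?_, ih B C h2⟩
    rw [vseq_cons_cons] at hy
    simp only [List.head?_cons, Option.mem_def, Option.some.injEq] at hy
    subst hy
    exact adjOrEq_of_mem_clique (pickx_mem h1.2).2 (pickx_mem h3.2).1

lemma vseq_getLast?_mem : ∀ (t : List (CliqueVert G)) (A B : CliqueVert G),
    (A :: B :: t).Chain' (cliqueGraph G).Adj → ∀ {y : V} {D : CliqueVert G},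
    (vseq (A :: B :: t)).getLast? = some y → (B :: t).getLast? = some D → y ∈ D.1 := by
  intro t
  induction t with
  | nil =>
    intro A B h y D hy hD
    have h1 := (List.isChain_cons_cons.mp h).1
    rw [vseq_cons_cons] at hy
    simp [vseq] at hy hD
    subst hy; subst hD
    exact (pickx_mem h1.2).2
  | cons C t' ih =>
    intro A B h y D hy hD
    have h2 := (List.isChain_cons_cons.mp h).2
    rw [vseq_cons_cons, vseq_cons_cons, List.getLast?_cons_cons, ← vseq_cons_cons] at hy
    rw [List.getLast?_cons_cons] at hD
    exact ih B C h2 hy hD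

lemma expand_walk : ∀ (t : List (CliqueVert G)) (A B : CliqueVert G),
    (A :: B :: t).Chain' (cliqueGraph G).Adj → ∀ {D : CliqueVert G},
    (B :: t).getLast? = some D →
    Hstut (cliqueGraph G) (A :: B :: t)
      ([A] ++ Lift G (vseq (A :: B :: t)) ++ [D]) := by
  intro t
  induction t with
  | nil =>
    intro A B h D hD
    have hDB : D = B := by simpa using hD.symm
    rw [hDB]
    have h1 : (cliqueGraph G).Adj A B := (List.isChain_cons_cons.mp h).1
    obtain ⟨hx1, hx2⟩ := pickx_mem h1.2
    have core := (hstut_mid (A := A) (X := Qv G (pickx A B)) (B := B)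
      ⟨pickx A B, hx1, mem_Qv _⟩ ⟨pickx A B, mem_Qv _, hx2⟩ ⟨pickx A B, hx1, hx2⟩).symm
    rw [vseq_cons_cons]
    simpa [vseq, Lift] using core
  | cons C t' ih =>
    intro A B h D hD
    rw [List.getLast?_cons_cons] at hD
    have hAB : (cliqueGraph G).Adj A B := (List.isChain_cons_cons.mp h).1
    have h2 := (List.isChain_cons_cons.mp h).2
    have hBC : (cliqueGraph G).Adj B C := (List.isChain_cons_cons.mp h2).1
    set x₀ := pickx A B with hx₀def
    set x₁ := pickx B C with hx₁def
    obtain ⟨hx01, hx02⟩ := pickx_mem hAB.2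
    obtain ⟨hx11, hx12⟩ := pickx_mem hBC.2
    have ihh := ih B C h2 hD
    have step1 : Hstut (cliqueGraph G) (A :: B :: C :: t')
        ([A, B] ++ Lift G (vseq (B :: C :: t')) ++ [D]) := by
      have := ihh.append_left [A] (by simp)
      simpa using this
    have hx01' : AdjOrEq G x₀ x₁ := adjOrEq_of_mem_clique hx02 hx11
    set R := Rv G x₀ x₁ with hRdef
    have c1 : Hstut (cliqueGraph G) [A, B, Qv G x₁] [A, B, R, Qv G x₁] := by
      have := Hstut.congr [A] []
        ((hstut_mid (A := B) (X := R) (B := Qv G x₁)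
          ⟨x₀, hx02, mem_Rv_left hx01'⟩ ⟨x₁, mem_Rv_right hx01', mem_Qv _⟩
          ⟨x₁, hx11, mem_Qv _⟩).symm) (by simp) (by simp)
      simpa using this
    have c2 : Hstut (cliqueGraph G) [A, B, R, Qv G x₁] [A, Qv G x₀, B, R, Qv G x₁] := by
      have := Hstut.congr [] [R, Qv G x₁]
        ((hstut_mid (A := A) (X := Qv G x₀) (B := B)
          ⟨x₀, hx01, mem_Qv _⟩ ⟨x₀, mem_Qv _, hx02⟩ ⟨x₀, hx01, hx02⟩).symm) (by simp) (by simp)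
      simpa using this
    have c3 : Hstut (cliqueGraph G) [A, Qv G x₀, B, R, Qv G x₁] [A, Qv G x₀, R, Qv G x₁] := by
      have := Hstut.congr [A] [Qv G x₁]
        (hstut_mid (A := Qv G x₀) (X := B) (B := R)
          ⟨x₀, mem_Qv _, hx02⟩ ⟨x₀, hx02, mem_Rv_left hx01'⟩
          ⟨x₀, mem_Qv _, mem_Rv_left hx01'⟩) (by simp) (by simp)
      simpa using this
    have core := (c1.trans c2).trans c3
    -- rewrite the lifted lists
    obtain ⟨vt, hvt⟩ : ∃ vt, vseq (B :: C :: t') = x₁ :: vt :=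
      ⟨vseq (C :: t'), vseq_cons_cons B C t'⟩
    have hlift1 : Lift G (vseq (B :: C :: t'))
        = Qv G x₁ :: (Lift G (vseq (B :: C :: t'))).tail := by
      rw [hvt]; exact lift_cons_head x₁ vt
    have hlift2 : Lift G (vseq (A :: B :: C :: t'))
        = Qv G x₀ :: R :: Lift G (vseq (B :: C :: t')) := by
      rw [vseq_cons_cons A B (C :: t'), hvt, ← hx₀def]
      rw [show Lift G (x₀ :: x₁ :: vt) = Qv G x₀ :: Rv G x₀ x₁ :: Lift G (x₁ :: vt) from by
        rw [Lift]]
    have step2 : Hstut (cliqueGraph G)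
        ([A, B] ++ Lift G (vseq (B :: C :: t')) ++ [D])
        ([A] ++ Lift G (vseq (A :: B :: C :: t')) ++ [D]) := by
      have hc := Hstut.congr [] ((Lift G (vseq (B :: C :: t'))).tail ++ [D]) core
        (by simp) (by simp)
      have e1 : [A, B] ++ Lift G (vseq (B :: C :: t')) ++ [D]
          = [] ++ [A, B, Qv G x₁] ++ ((Lift G (vseq (B :: C :: t'))).tail ++ [D]) := by
        conv_lhs => rw [hlift1]
        simp
      have e2 : [A] ++ Lift G (vseq (A :: B :: C :: t')) ++ [D]
          = [] ++ [A, Qv G x₀, R, Qv G x₁] ++ ((Lift G (vseq (B :: C :: t'))).tail ++ [D]) := by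
        rw [hlift2]
        conv_lhs => rw [hlift1]
        simp
      rw [e1, e2]
      exact hc
    exact step1.trans step2

end Pick

lemma maxClique_nonempty [Nonempty V] (A : CliqueVert G) : A.1.Nonempty := by
  rcases Set.eq_empty_or_nonempty A.1 with h | h
  · obtain ⟨v⟩ := ‹Nonempty V›
    have h2 := A.2.2 {v} (isClique_singleton v) (by rw [h]; exact Set.empty_subset _)
    rw [h] at h2
    exact absurd h2 (by simp)
  · exact h

lemma reach_of_inter {A B : CliqueVert G} (h : (A.1 ∩ B.1).Nonempty) :
    (cliqueGraph G).Reachable A B := by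
  rcases eq_or_ne A B with rfl | hne
  · exact SimpleGraph.Reachable.refl A
  · exact (cg_adj hne h).reachable

lemma reach_clique {a b : V} (w : G.Walk a b) :
    ∀ {A B : CliqueVert G}, a ∈ A.1 → b ∈ B.1 → (cliqueGraph G).Reachable A B := by
  induction w with
  | nil => intro A B ha hb; exact reach_of_inter ⟨_, ha, hb⟩
  | @cons u v r h p ih =>
    intro A B ha hb
    exact (reach_of_inter ⟨u, ha, mem_Rv_left (Or.inr h)⟩).trans
      (ih (mem_Rv_right (Or.inr h)) hb)

lemma cliqueGraph_connected (h : G.Connected) : (cliqueGraph G).Connected := by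
  have hV : Nonempty V := h.nonempty
  have hne : Nonempty (CliqueVert G) := ⟨Qv G (Classical.arbitrary V)⟩
  refine SimpleGraph.Connected.mk ?_
  intro A B
  obtain ⟨a, ha⟩ := maxClique_nonempty A
  obtain ⟨b, hb⟩ := maxClique_nonempty B
  exact (h.preconnected a b).elim fun w => reach_clique w ha hb

end CliqueLevel

/-- If `G` is triangularly simply connected, then so is its clique graph `kG`. -/
theorem cliqueGraph_triSimplyConnected {V : Type*} (G : SimpleGraph V)
    (hG : TriSimplyConnected G) : TriSimplyConnected (cliqueGraph G) := by
  have hV : Nonempty V := hG.1.nonempty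
  refine ⟨cliqueGraph_connected hG.1, ?_⟩
  intro C₀ l hchain hlast
  cases l with
  | nil => exact Relation.ReflTransGen.refl
  | cons A₁ t =>
    have hD : (A₁ :: t).getLast? = some C₀ := by
      rw [List.getLast?_eq_getLast (l := A₁ :: t) (by simp),
        show (A₁ :: t).getLast (by simp) = (C₀ :: A₁ :: t).getLast (by simp) from
          (List.getLast_cons (by simp)).symm, hlast]
    have hexp := expand_walk t C₀ A₁ hchain hD
    have hadj : (cliqueGraph G).Adj C₀ A₁ := (List.isChain_cons_cons.mp hchain).1
    obtain ⟨hx₀C, hx₀A⟩ := pickx_mem hadj.2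
    have hxt : vseq (C₀ :: A₁ :: t) = pickx C₀ A₁ :: vseq (A₁ :: t) := vseq_cons_cons _ _ _
    have hxs_ne : vseq (C₀ :: A₁ :: t) ≠ [] := by rw [hxt]; simp
    have hw? : (vseq (C₀ :: A₁ :: t)).getLast? = some ((vseq (C₀ :: A₁ :: t)).getLast hxs_ne) :=
      List.getLast?_eq_getLast hxs_ne
    generalize hwdef : (vseq (C₀ :: A₁ :: t)).getLast hxs_ne = w at hw?
    generalize hx₀def : pickx C₀ A₁ = x₀ at *
    generalize hxtdef : vseq (A₁ :: t) = xt at *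
    have hwC : w ∈ C₀.1 := vseq_getLast?_mem t C₀ A₁ hchain hw? hD
    have hwx₀ : AdjOrEq G w x₀ := adjOrEq_of_mem_clique hwC hx₀C
    have hw?' : (x₀ :: xt).getLast? = some w := by rw [← hxt]; exact hw?
    -- the closed vertex walk
    have hzs_shape : vseq (C₀ :: A₁ :: t) ++ [x₀] = x₀ :: (xt ++ [x₀]) := by rw [hxt]; simp
    have hzs_chain : (x₀ :: (xt ++ [x₀])).Chain' (AdjOrEq G) := by
      rw [← hzs_shape]
      simp only [List.Chain']
      rw [List.isChain_append]
      refine ⟨vseq_wchain t C₀ A₁ hchain, by simp, ?_⟩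
      intro x hx y hy
      rw [Option.mem_def, hw?] at hx
      simp only [List.head?_cons, Option.mem_def, Option.some.injEq] at hy
      cases hx; cases hy
      exact hwx₀
    have hzs_last : (x₀ :: (xt ++ [x₀])).getLast (by simp) = x₀ := by simp
    have hmaster := master_contraction hG x₀ (xt ++ [x₀]) hzs_chain hzs_last
    -- lift of xs ++ [x₀]
    have hLxs_last : (Lift G (x₀ :: xt)).getLast? = some (Qv G w) := by
      rw [lift_getLast? x₀ xt, hw?']; rfl
    have hsplitL : Lift G (x₀ :: xt) = (Lift G (x₀ :: xt)).dropLast ++ [Qv G w] :=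
      eq_dropLast_append_of_getLast? hLxs_last
    have hgl : (x₀ :: xt).getLast (by simp) = w := by
      rw [List.getLast?_eq_getLast (l := x₀ :: xt) (by simp)] at hw?'; simpa using hw?'
    have hLiftzs : Lift G ((x₀ :: xt) ++ [x₀])
        = Lift G (x₀ :: xt) ++ [Rv G w x₀, Qv G x₀] := by
      rw [show (x₀ :: xt) ++ [x₀] = (x₀ :: xt) ++ x₀ :: [] from rfl,
        lift_split (x₀ :: xt) x₀ [], liftE_eq x₀ xt x₀, hgl]
      rw [show Lift G [x₀] = [Qv G x₀] from by rw [Lift]]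
      simp
    -- bridge A core
    have d1 : Hstut (cliqueGraph G) [Qv G w, Rv G w x₀, Qv G x₀, C₀] [Qv G w, Rv G w x₀, C₀] := by
      have := Hstut.congr [Qv G w] []
        (hstut_mid (A := Rv G w x₀) (X := Qv G x₀) (B := C₀)
          ⟨x₀, mem_Rv_right hwx₀, mem_Qv _⟩ ⟨x₀, mem_Qv _, hx₀C⟩
          ⟨x₀, mem_Rv_right hwx₀, hx₀C⟩) (by simp) (by simp)
      simpa using this
    have d2 : Hstut (cliqueGraph G) [Qv G w, Rv G w x₀, C₀] [Qv G w, C₀] :=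
      hstut_mid ⟨w, mem_Qv w, mem_Rv_left hwx₀⟩ ⟨w, mem_Rv_left hwx₀, hwC⟩
        ⟨w, mem_Qv w, hwC⟩
    have coreA := (d1.trans d2).symm
    have bridgeA := Hstut.congr ([C₀] ++ (Lift G (x₀ :: xt)).dropLast) [] coreA
      (by simp) (by simp)
    have eA1 : [C₀] ++ Lift G (x₀ :: xt) ++ [C₀]
        = ([C₀] ++ (Lift G (x₀ :: xt)).dropLast) ++ [Qv G w, C₀] ++ [] := by
      conv_lhs => rw [hsplitL]
      simp
    have eA2 : [C₀] ++ Lift G ((x₀ :: xt) ++ [x₀]) ++ [C₀]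
        = ([C₀] ++ (Lift G (x₀ :: xt)).dropLast) ++ [Qv G w, Rv G w x₀, Qv G x₀, C₀] ++ [] := by
      rw [hLiftzs]
      conv_lhs => rw [hsplitL]
      simp
    have stepA : Hstut (cliqueGraph G) ([C₀] ++ Lift G (x₀ :: xt) ++ [C₀])
        ([C₀] ++ Lift G ((x₀ :: xt) ++ [x₀]) ++ [C₀]) := by
      rw [eA1, eA2]; exact bridgeA
    -- bridge B
    have hmaster' : Hstut (cliqueGraph G) (Lift G ((x₀ :: xt) ++ [x₀])) [Qv G x₀] := by
      rw [show (x₀ :: xt) ++ [x₀] = x₀ :: (xt ++ [x₀]) from by simp]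
      exact hmaster
    have hLzs_head : (Lift G ((x₀ :: xt) ++ [x₀])).head? = some (Qv G x₀) := by
      rw [show (x₀ :: xt) ++ [x₀] = x₀ :: (xt ++ [x₀]) from by simp]
      exact lift_head? _ _
    have hLzs_last : (Lift G ((x₀ :: xt) ++ [x₀])).getLast? = some (Qv G x₀) := by
      rw [show (x₀ :: xt) ++ [x₀] = x₀ :: (xt ++ [x₀]) from by simp,
        lift_getLast?,
        show (x₀ :: (xt ++ [x₀])).getLast? = some x₀ from by
          rw [show x₀ :: (xt ++ [x₀]) = (x₀ :: xt) ++ [x₀] from by simp, List.getLast?_concat]]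
      rfl
    have stepB := Hstut.congr [C₀] [C₀] hmaster' (by rw [hLzs_head]; rfl)
      (by rw [hLzs_last]; rfl)
    -- bridge C
    have stepC : Hstut (cliqueGraph G) [C₀, Qv G x₀, C₀] [C₀] :=
      hstut_dead ⟨x₀, hx₀C, mem_Qv x₀⟩
    -- assemble
    have hexp' : Hstut (cliqueGraph G) (C₀ :: A₁ :: t) ([C₀] ++ Lift G (x₀ :: xt) ++ [C₀]) := by
      rw [← hxt] at *
      exact hexp
    have total : Hstut (cliqueGraph G) (C₀ :: A₁ :: t) [C₀] :=
      (((hexp'.trans stepA).trans stepB).trans (by simpa using stepC))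
    have hredcs : red (C₀ :: A₁ :: t) = C₀ :: A₁ :: t :=
      red_eq_self_of_chain'_ne (List.IsChain.imp (fun a b hab => hab.1) hchain)
    unfold Hstut at total
    rw [hredcs, red_single] at total
    exact total
end
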